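/- arXiv:2012.03056 — 11 statements merged into one kernel-verified Lean document; each statement's English description precedes it below -/
import Mathlib

section
/- Let R be a commutative ring, M an R-module, A an m × n matrix with entries in M, and b an n × 1 column vector with entries in R (interpreting Ax = b via scalar products of R-entries of x against M-entries of A). Then the linear system Ax = b has a solution x ∈ R^m if and only if for every maximal ideal 𝔭 of R the localized system has a solution in R_𝔭^m. -/
open Finset

/-- A finite product of localization maps is a localization map. -/
theorem isLocalizedModule_pi_aux {R : Type*} [CommSemiring R] (S : Submonoid R)
    {ι : Type*} [Fintype ι] [DecidableEq ι] {M M' : Type*}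
    [AddCommMonoid M] [Module R M] [AddCommMonoid M'] [Module R M']
    (f : M →ₗ[R] M') [IsLocalizedModule S f] :
    IsLocalizedModule S
      (LinearMap.pi fun i : ι => f.comp (LinearMap.proj i) :
        (ι → M) →ₗ[R] (ι → M')) where
  map_units s := by
    rw [Module.End.isUnit_iff]
    constructor
    · intro x y h
      funext i
      exact ((Module.End.isUnit_iff _).mp (IsLocalizedModule.map_units f s)).1 <| by
        simpa [Module.algebraMap_end_apply] using congrFun h i
    · intro y
      choose z hz using fun i =>
        ((Module.End.isUnit_iff _).mp (IsLocalizedModule.map_units f s)).2 (y i)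
      refine ⟨z, funext fun i => ?_⟩
      simpa [Module.algebraMap_end_apply] using hz i
  surj y := by
    choose p hp using fun i => IsLocalizedModule.surj S f (y i)
    refine ⟨⟨fun i => (∏ k ∈ univ.erase i, ((p k).2 : R)) • (p i).1, ∏ i, (p i).2⟩,
      funext fun i => ?_⟩
    have hc : ((∏ k, (p k).2 : S) : R) = ∏ k, ((p k).2 : R) := by
      simp
    simp only [Submonoid.smul_def, Pi.smul_apply, LinearMap.pi_apply, LinearMap.comp_apply,
      LinearMap.proj_apply, hc]
    rw [← Finset.prod_erase_mul univ _ (mem_univ i), mul_smul, map_smul]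
    rw [← hp i, Submonoid.smul_def]
  exists_of_eq {x₁ x₂} h := by
    choose c hc using fun i =>
      IsLocalizedModule.exists_of_eq (S := S) (f := f) (congrFun h i)
    refine ⟨∏ i, c i, funext fun i => ?_⟩
    have hc' : ((∏ k, c k : S) : R) = ∏ k, ((c k : R)) := by simp
    simp only [Submonoid.smul_def, Pi.smul_apply, hc']
    rw [← Finset.prod_erase_mul univ _ (mem_univ i), mul_smul, mul_smul]
    congr 1
    simpa [Submonoid.smul_def] using hc i

/-- A linear system with coefficients in a module `M` and unknowns in `R`
has a solution over `R` iff it has a solution over every localization at a maximal ideal. -/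
theorem linear_system_local_global {R M : Type*} [CommRing R] [AddCommGroup M] [Module R M]
    {n m : ℕ} (A : Fin n → Fin m → M) (b : Fin n → M) :
    (∃ x : Fin m → R, ∀ i, (∑ j, x j • A i j) = b i) ↔
      (∀ (p : Ideal R) (_ : p.IsMaximal),
        ∃ x : Fin m → Localization p.primeCompl,
          ∀ i, (∑ j, x j • LocalizedModule.mkLinearMap p.primeCompl M (A i j)) =
            LocalizedModule.mkLinearMap p.primeCompl M (b i)) := by
  classical
  set F : (Fin m → R) →ₗ[R] (Fin n → M) :=
    LinearMap.pi fun i => ∑ j, (LinearMap.proj j).smulRight (A i j) with hFdef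
  have hF : ∀ x i, F x i = ∑ j, x j • A i j := by
    intro x i
    simp [hFdef]
  constructor
  · rintro ⟨x, hx⟩ p hp
    refine ⟨fun j => algebraMap R _ (x j), fun i => ?_⟩
    have : ∀ j, (algebraMap R (Localization p.primeCompl) (x j)) •
        LocalizedModule.mkLinearMap p.primeCompl M (A i j) =
        LocalizedModule.mkLinearMap p.primeCompl M (x j • A i j) := fun j => by
      rw [algebraMap_smul, map_smul]
    rw [Finset.sum_congr rfl fun j _ => this j, ← map_sum, hx i]
  · intro h
    have hb : b ∈ LinearMap.range F := by
      apply @Submodule.mem_of_localization_maximal R (Fin n → M) _ _ _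
        (fun (P : Ideal R) _ => Fin n → LocalizedModule P.primeCompl M) _ _
        (fun (P : Ideal R) _ => LinearMap.pi fun i : Fin n =>
          (LocalizedModule.mkLinearMap P.primeCompl M).comp (LinearMap.proj i))
        (fun P _ => isLocalizedModule_pi_aux P.primeCompl _)
        b (LinearMap.range F)
      intro P hP
      haveI := isLocalizedModule_pi_aux (ι := Fin n) P.primeCompl
        (LocalizedModule.mkLinearMap P.primeCompl M)
      obtain ⟨x, hx⟩ := h P hP
      -- write each `x j` with a common denominator
      choose a s hs using (fun j => by
        obtain ⟨⟨a, s⟩, h⟩ := IsLocalization.mk'_surjective P.primeCompl (x j)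
        exact ⟨a, s, h⟩ : ∀ j, ∃ (a : R) (s : P.primeCompl),
          IsLocalization.mk' (Localization P.primeCompl) a s = x j)
      set σ : P.primeCompl := ∏ j, s j with hσ
      set u : Fin m → R := fun j => (∏ k ∈ univ.erase j, (s k : R)) * a j with hu
      have key : ∀ i, LocalizedModule.mkLinearMap P.primeCompl M (∑ j, u j • A i j) =
          σ • LocalizedModule.mkLinearMap P.primeCompl M (b i) := by
        intro i
        rw [map_sum]
        have : ∀ j, LocalizedModule.mkLinearMap P.primeCompl M (u j • A i j) =
            (σ : R) • (x j • LocalizedModule.mkLinearMap P.primeCompl M (A i j)) := by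
          intro j
          have hσc : ((σ : R)) = (∏ k ∈ univ.erase j, (s k : R)) * (s j : R) := by
            rw [hσ]
            push_cast
            rw [Finset.prod_erase_mul univ _ (mem_univ j)]
          have h1 : (σ : R) • x j = algebraMap R (Localization P.primeCompl) (u j) := by
            rw [← hs j, Algebra.smul_def, hσc, map_mul, mul_assoc,
              IsLocalization.mk'_spec']
            simp only [hu, map_mul]
          rw [map_smul, ← smul_assoc, h1, algebraMap_smul]
        rw [Finset.sum_congr rfl fun j _ => this j, ← Finset.smul_sum, hx i,
          Submonoid.smul_def]
      refine ⟨fun i => ∑ j, u j • A i j, ⟨u, funext fun i => (hF u i)⟩, σ, ?_⟩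
      rw [IsLocalizedModule.mk'_eq_iff]
      funext i
      simpa using key i
    obtain ⟨x, hx⟩ := hb
    exact ⟨x, fun i => by rw [← congrFun hx i, hF]⟩
end

section
/- Let M be a two-generated faithful module over a commutative ring R, and let m, m' be two generating pairs of M. Then m and m' lie in the same orbit under the right action of SL₂(R) if and only if for every maximal ideal 𝔭 of R, the images of m and m' in M_𝔭 lie in the same orbit under SL₂(R_𝔭). -/
open Matrix Submodule Set

section DetDiff

variable {S : Type*} [CommRing S] {N : Type*} [AddCommGroup N] [Module S N]

/-- If two matrices both send the pair `v` to the pair `ww`, then their determinants differ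
by an element of the ideal generated by coordinates of relations of `v`. -/
lemma det_diff_aux (v ww : Fin 2 → N) (A B : Matrix (Fin 2) (Fin 2) S)
    (hA : ∀ j, ww j = ∑ i, A i j • v i) (hB : ∀ j, ww j = ∑ i, B i j • v i) :
    ∃ y z : Fin 2 → S, (∑ i, y i • v i = 0) ∧ (∑ i, z i • v i = 0) ∧
      A.det - B.det = y 0 + z 1 := by
  have hA0 := hA 0; have hA1 := hA 1; have hB0 := hB 0; have hB1 := hB 1
  simp only [Fin.sum_univ_two] at hA0 hA1 hB0 hB1
  set c : Fin 2 → Fin 2 → S := fun j i => A i j - B i j with hc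
  have hc0 : c 0 0 • v 0 + c 0 1 • v 1 = 0 := by
    simp only [hc, sub_smul]
    linear_combination (norm := module) hB0 - hA0
  have hc1 : c 1 0 • v 0 + c 1 1 • v 1 = 0 := by
    simp only [hc, sub_smul]
    linear_combination (norm := module) hB1 - hA1
  refine ⟨fun i => B 1 1 * c 0 i - B 1 0 * c 1 i + c 1 1 * c 0 i - c 0 1 * c 1 i,
    fun i => B 0 0 * c 1 i - B 0 1 * c 0 i, ?_, ?_, ?_⟩
  · simp only [Fin.sum_univ_two]
    linear_combination (norm := module) (B 1 1 + c 1 1) • hc0 - (B 1 0 + c 0 1) • hc1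
  · simp only [Fin.sum_univ_two]
    linear_combination (norm := module) (B 0 0) • hc1 - (B 0 1) • hc0
  · simp only [Matrix.det_fin_two, hc]
    ring

end DetDiff

section Construct

variable {R M : Type*} [CommRing R] [AddCommGroup M] [Module R M]

/-- The key global construction: if some matrix `A` sends `v` to `w` and `det A - 1` lies in
the ideal of coordinates of relations of `v`, then an `SL₂` matrix sends `v` to `w`. -/
lemma construct_sl2 (hfaithful : ∀ r : R, (∀ x : M, r • x = 0) → r = 0)
    (v w : Fin 2 → M)
    (hv : Submodule.span R (Set.range v) = ⊤)
    (hw : Submodule.span R (Set.range w) = ⊤)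
    (A : Matrix (Fin 2) (Fin 2) R) (hA : ∀ j, w j = ∑ i, A i j • v i)
    (y z : Fin 2 → R) (hy : ∑ i, y i • v i = 0) (hz : ∑ i, z i • v i = 0)
    (hdet : A.det = 1 + y 0 + z 1) :
    ∃ σ : Matrix.SpecialLinearGroup (Fin 2) R,
      ∀ j, w j = ∑ i, (σ : Matrix (Fin 2) (Fin 2) R) i j • v i := by
  -- the rank-one relation coming from faithfulness
  have rank1 : ∀ y' z' : Fin 2 → R, (y' 0 • v 0 + y' 1 • v 1 = 0) →
      (z' 0 • v 0 + z' 1 • v 1 = 0) → y' 0 * z' 1 = y' 1 * z' 0 := by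
    intro y' z' hy' hz'
    have key0 : (y' 0 * z' 1 - y' 1 * z' 0) • v 0 = 0 := by
      linear_combination (norm := module) (z' 1) • hy' - (y' 1) • hz'
    have key1 : (y' 0 * z' 1 - y' 1 * z' 0) • v 1 = 0 := by
      linear_combination (norm := module) (y' 0) • hz' - (z' 0) • hy'
    have key : ∀ x : M, (y' 0 * z' 1 - y' 1 * z' 0) • x = 0 := by
      intro x
      obtain ⟨c, rfl⟩ := mem_span_range_iff_exists_fun R |>.mp
        (hv ▸ Submodule.mem_top : x ∈ Submodule.span R (Set.range v))
      rw [Fin.sum_univ_two, smul_add, smul_comm _ (c 0), smul_comm _ (c 1), key0, key1,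
        smul_zero, smul_zero, add_zero]
    exact sub_eq_zero.mp (hfaithful _ key)
  have hy' : y 0 • v 0 + y 1 • v 1 = 0 := by simpa [Fin.sum_univ_two] using hy
  have hz' : z 0 • v 0 + z 1 • v 1 = 0 := by simpa [Fin.sum_univ_two] using hz
  -- choose a matrix B expressing v in terms of w
  have hBex : ∀ j, ∃ cc : Fin 2 → R, ∑ i, cc i • w i = v j := fun j =>
    mem_span_range_iff_exists_fun R |>.mp (hw ▸ Submodule.mem_top)
  choose Bc hBc using hBex
  have hA0 := hA 0; have hA1 := hA 1; have hB0 := hBc 0; have hB1 := hBc 1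
  simp only [Fin.sum_univ_two] at hA0 hA1 hB0 hB1
  -- the columns of A*B - 1 are relations of v
  have hu0 : (A 0 0 * Bc 0 0 + A 0 1 * Bc 0 1 - 1) • v 0
      + (A 1 0 * Bc 0 0 + A 1 1 * Bc 0 1) • v 1 = 0 := by
    linear_combination (norm := module) hB0 - (Bc 0 0) • hA0 - (Bc 0 1) • hA1
  have hu1 : (A 0 0 * Bc 1 0 + A 0 1 * Bc 1 1) • v 0
      + (A 1 0 * Bc 1 0 + A 1 1 * Bc 1 1 - 1) • v 1 = 0 := by
    linear_combination (norm := module) hB1 - (Bc 1 0) • hA0 - (Bc 1 1) • hA1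
  -- rank-one identities
  have h1 : y 0 * z 1 = y 1 * z 0 := rank1 y z hy' hz'
  have h2 : y 0 * (A 1 0 * Bc 1 0 + A 1 1 * Bc 1 1 - 1)
      = y 1 * (A 0 0 * Bc 1 0 + A 0 1 * Bc 1 1) :=
    rank1 y (fun i => if i = 0 then A 0 0 * Bc 1 0 + A 0 1 * Bc 1 1
      else A 1 0 * Bc 1 0 + A 1 1 * Bc 1 1 - 1) hy' (by simpa using hu1)
  have h3 : z 0 * (A 1 0 * Bc 0 0 + A 1 1 * Bc 0 1)
      = z 1 * (A 0 0 * Bc 0 0 + A 0 1 * Bc 0 1 - 1) :=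
    rank1 z (fun i => if i = 0 then A 0 0 * Bc 0 0 + A 0 1 * Bc 0 1 - 1
      else A 1 0 * Bc 0 0 + A 1 1 * Bc 0 1) hz' (by simpa using hu0)
  have hdet' : A 0 0 * A 1 1 - A 0 1 * A 1 0 = 1 + y 0 + z 1 := by
    rw [← Matrix.det_fin_two]; exact hdet
  -- the corrected matrix
  have hdetσ : (!![A 0 0 + (-(Bc 1 1) * y 0 + Bc 0 1 * z 0), A 0 1 + (Bc 1 0 * y 0 - Bc 0 0 * z 0);
      A 1 0 + (-(Bc 1 1) * y 1 + Bc 0 1 * z 1), A 1 1 + (Bc 1 0 * y 1 - Bc 0 0 * z 1)] :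
      Matrix (Fin 2) (Fin 2) R).det = 1 := by
    rw [Matrix.det_fin_two_of]
    linear_combination hdet' - h2 + h3 + (Bc 0 0 * Bc 1 1 - Bc 1 0 * Bc 0 1) * h1
  refine ⟨⟨_, hdetσ⟩, ?_⟩
  intro j
  fin_cases j
  · show w 0 = ∑ i, (!![A 0 0 + (-(Bc 1 1) * y 0 + Bc 0 1 * z 0),
      A 0 1 + (Bc 1 0 * y 0 - Bc 0 0 * z 0);
      A 1 0 + (-(Bc 1 1) * y 1 + Bc 0 1 * z 1), A 1 1 + (Bc 1 0 * y 1 - Bc 0 0 * z 1)] :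
      Matrix (Fin 2) (Fin 2) R) i 0 • v i
    simp [Fin.sum_univ_two]
    linear_combination (norm := module) hA0 + (Bc 1 1) • hy' - (Bc 0 1) • hz'
  · show w 1 = ∑ i, (!![A 0 0 + (-(Bc 1 1) * y 0 + Bc 0 1 * z 0),
      A 0 1 + (Bc 1 0 * y 0 - Bc 0 0 * z 0);
      A 1 0 + (-(Bc 1 1) * y 1 + Bc 0 1 * z 1), A 1 1 + (Bc 1 0 * y 1 - Bc 0 0 * z 1)] :
      Matrix (Fin 2) (Fin 2) R) i 1 • v i
    simp [Fin.sum_univ_two]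
    linear_combination (norm := module) hA1 - (Bc 1 0) • hy' + (Bc 0 0) • hz'

end Construct

/-- For a faithful two-generated module `M`, two generating pairs are
`SL₂(R)`-equivalent iff they are `SL₂(R_𝔭)`-equivalent at every maximal ideal `𝔭`. -/
theorem sl2_equiv_local_global {R M : Type*} [CommRing R] [AddCommGroup M] [Module R M]
    (hfaithful : ∀ r : R, (∀ x : M, r • x = 0) → r = 0)
    (htwo : ∃ a b : M, Submodule.span R {a, b} = ⊤)
    (v w : Fin 2 → M)
    (hv : Submodule.span R (Set.range v) = ⊤)
    (hw : Submodule.span R (Set.range w) = ⊤) :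
    (∃ σ : Matrix.SpecialLinearGroup (Fin 2) R,
        ∀ j, w j = ∑ i, (σ : Matrix (Fin 2) (Fin 2) R) i j • v i) ↔
      (∀ (p : Ideal R) (_ : p.IsMaximal),
        ∃ σ : Matrix.SpecialLinearGroup (Fin 2) (Localization p.primeCompl),
          ∀ j, LocalizedModule.mkLinearMap p.primeCompl M (w j) =
            ∑ i, (σ : Matrix (Fin 2) (Fin 2) (Localization p.primeCompl)) i j •
              LocalizedModule.mkLinearMap p.primeCompl M (v i)) := by
  constructor
  · rintro ⟨σ, hσ⟩ p hp
    refine ⟨Matrix.SpecialLinearGroup.map (algebraMap R (Localization p.primeCompl)) σ, ?_⟩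
    intro j
    rw [hσ j, map_sum (LocalizedModule.mkLinearMap p.primeCompl M) _ Finset.univ]
    refine Finset.sum_congr rfl fun i _ => ?_
    rw [_root_.map_smul]
    simp only [Matrix.SpecialLinearGroup.map_apply_coe, RingHom.mapMatrix_apply,
      Matrix.map_apply]
    rw [algebraMap_smul]
  · intro h
    -- choose a matrix A expressing w in terms of v
    have hAex : ∀ j, ∃ cc : Fin 2 → R, ∑ i, cc i • v i = w j := fun j =>
      mem_span_range_iff_exists_fun R |>.mp (hv ▸ Submodule.mem_top)
    choose Ac hAc using hAex
    set A : Matrix (Fin 2) (Fin 2) R := Matrix.of (fun i j => Ac j i) with hAdef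
    have hA : ∀ j, w j = ∑ i, A i j • v i := fun j => (hAc j).symm
    -- the ideal of scalars r with r * (det A - 1) in the relation-coordinate ideal
    set J : Ideal R :=
      { carrier := {r | ∃ y z : Fin 2 → R, (∑ i, y i • v i = 0) ∧ (∑ i, z i • v i = 0) ∧
          r * (A.det - 1) = y 0 + z 1}
        add_mem' := by
          rintro r r' ⟨y, z, hy, hz, hr⟩ ⟨y', z', hy', hz', hr'⟩
          refine ⟨y + y', z + z', ?_, ?_, ?_⟩
          · simp only [Pi.add_apply, add_smul, Finset.sum_add_distrib, hy, hy', add_zero]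
          · simp only [Pi.add_apply, add_smul, Finset.sum_add_distrib, hz, hz', add_zero]
          · simp only [Pi.add_apply]; linear_combination hr + hr'
        zero_mem' := ⟨0, 0, by simp, by simp, by simp⟩
        smul_mem' := by
          rintro c r ⟨y, z, hy, hz, hr⟩
          refine ⟨c • y, c • z, ?_, ?_, ?_⟩
          · simp only [Pi.smul_apply, smul_eq_mul, mul_smul, ← Finset.smul_sum, hy, smul_zero]
          · simp only [Pi.smul_apply, smul_eq_mul, mul_smul, ← Finset.smul_sum, hz, smul_zero]
          · simp only [Pi.smul_apply, smul_eq_mul]; linear_combination c * hr } with hJdef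
    -- J is not contained in any maximal ideal
    have hJmax : ∀ (p : Ideal R), p.IsMaximal → ¬ J ≤ p := by
      intro p hp hle
      obtain ⟨σp, hσp⟩ := h p hp
      set f := LocalizedModule.mkLinearMap p.primeCompl M with hf
      set φ := algebraMap R (Localization p.primeCompl) with hφ
      have hA' : ∀ j, f (w j) = ∑ i, (A.map φ) i j • f (v i) := by
        intro j
        rw [hA j, map_sum f _ Finset.univ]
        refine Finset.sum_congr rfl fun i _ => ?_
        rw [_root_.map_smul, Matrix.map_apply, algebraMap_smul]
      obtain ⟨yb, zb, hyb, hzb, hd⟩ := det_diff_aux (fun i => f (v i)) (fun j => f (w j))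
        (A.map φ) (σp : Matrix (Fin 2) (Fin 2) (Localization p.primeCompl)) hA' hσp
      rw [σp.prop, show A.map (⇑φ) = φ.mapMatrix A from rfl, ← RingHom.map_det] at hd
      -- clear denominators of yb and zb
      obtain ⟨b, hb⟩ := IsLocalization.exist_integer_multiples_of_finite p.primeCompl
        (Sum.elim yb zb : Fin 2 ⊕ Fin 2 → Localization p.primeCompl)
      choose num hnum using hb
      set Y : Fin 2 → R := fun i => num (Sum.inl i) with hY
      set Z : Fin 2 → R := fun i => num (Sum.inr i) with hZ
      have hYe : ∀ i, φ (Y i) = φ (b : R) * yb i := fun i => by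
        have := hnum (Sum.inl i); rwa [Algebra.smul_def, Sum.elim_inl] at this
      have hZe : ∀ i, φ (Z i) = φ (b : R) * zb i := fun i => by
        have := hnum (Sum.inr i); rwa [Algebra.smul_def, Sum.elim_inr] at this
      -- the cleared relations become relations after further multiplication
      have hYrel : f (∑ i, Y i • v i) = 0 := by
        rw [map_sum]
        have : ∀ i, f (Y i • v i) = (φ (b : R) * yb i) • f (v i) := fun i => by
          rw [_root_.map_smul, ← algebraMap_smul (Localization p.primeCompl) (Y i) (f (v i)), ← hφ,
            hYe i]
        rw [Finset.sum_congr rfl fun i _ => this i]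
        have : ∑ i, (φ (b : R) * yb i) • f (v i) = φ (b : R) • ∑ i, yb i • f (v i) := by
          rw [Finset.smul_sum]
          exact Finset.sum_congr rfl fun i _ => (mul_smul _ _ _)
        rw [this, hyb, smul_zero]
      have hZrel : f (∑ i, Z i • v i) = 0 := by
        rw [map_sum]
        have : ∀ i, f (Z i • v i) = (φ (b : R) * zb i) • f (v i) := fun i => by
          rw [_root_.map_smul, ← algebraMap_smul (Localization p.primeCompl) (Z i) (f (v i)), ← hφ,
            hZe i]
        rw [Finset.sum_congr rfl fun i _ => this i]
        have : ∑ i, (φ (b : R) * zb i) • f (v i) = φ (b : R) • ∑ i, zb i • f (v i) := by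
          rw [Finset.smul_sum]
          exact Finset.sum_congr rfl fun i _ => (mul_smul _ _ _)
        rw [this, hzb, smul_zero]
      obtain ⟨cy, hcy⟩ := (IsLocalizedModule.eq_zero_iff p.primeCompl f).mp hYrel
      obtain ⟨cz, hcz⟩ := (IsLocalizedModule.eq_zero_iff p.primeCompl f).mp hZrel
      -- the cleared determinant equation
      have hdeq : φ ((b : R) * (A.det - 1)) = φ (Y 0 + Z 1) := by
        rw [_root_.map_mul, _root_.map_sub, _root_.map_one, hd, _root_.map_add, hYe 0, hZe 1]
        ring
      obtain ⟨c0, hc0⟩ := (IsLocalization.eq_iff_exists p.primeCompl _).mp hdeq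
      -- assemble the element of J outside p
      have hmem : (c0 : R) * (cy : R) * (cz : R) * (b : R) ∈ J := by
        refine ⟨fun i => (c0 : R) * (cz : R) * ((cy : R) * Y i),
          fun i => (c0 : R) * (cy : R) * ((cz : R) * Z i), ?_, ?_, ?_⟩
        · have h0 : ∑ i, ((cy : R) * Y i) • v i = 0 := by
            have hs : ∑ i, ((cy : R) * Y i) • v i = (cy : R) • ∑ i, Y i • v i := by
              rw [Finset.smul_sum]
              exact Finset.sum_congr rfl fun i _ => (mul_smul _ _ _)
            rw [hs, ← Submonoid.smul_def, hcy]
          calc ∑ i, ((c0 : R) * (cz : R) * ((cy : R) * Y i)) • v i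
              = ((c0 : R) * (cz : R)) • ∑ i, ((cy : R) * Y i) • v i := by
                rw [Finset.smul_sum]
                exact Finset.sum_congr rfl fun i _ => (mul_smul _ _ _)
            _ = 0 := by rw [h0, smul_zero]
        · have h0 : ∑ i, ((cz : R) * Z i) • v i = 0 := by
            have hs : ∑ i, ((cz : R) * Z i) • v i = (cz : R) • ∑ i, Z i • v i := by
              rw [Finset.smul_sum]
              exact Finset.sum_congr rfl fun i _ => (mul_smul _ _ _)
            rw [hs, ← Submonoid.smul_def, hcz]
          calc ∑ i, ((c0 : R) * (cy : R) * ((cz : R) * Z i)) • v i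
              = ((c0 : R) * (cy : R)) • ∑ i, ((cz : R) * Z i) • v i := by
                rw [Finset.smul_sum]
                exact Finset.sum_congr rfl fun i _ => (mul_smul _ _ _)
            _ = 0 := by rw [h0, smul_zero]
        · linear_combination ((cy : R) * (cz : R)) * hc0
      have hnot : (c0 : R) * (cy : R) * (cz : R) * (b : R) ∉ p := by
        have : ((c0 * cy * cz * b : p.primeCompl) : R) ∉ p :=
          (c0 * cy * cz * b : p.primeCompl).prop
        simpa using this
      exact hnot (hle hmem)
    -- hence J = ⊤ and 1 ∈ J
    have hJtop : J = ⊤ := by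
      by_contra hne
      obtain ⟨p, hp, hple⟩ := Ideal.exists_le_maximal J hne
      exact hJmax p hp hple
    have h1J : (1 : R) ∈ J := hJtop ▸ Submodule.mem_top
    obtain ⟨y, z, hy, hz, hyz⟩ := h1J
    rw [one_mul] at hyz
    exact construct_sl2 hfaithful v w hv hw A hA y z hy hz (by linear_combination hyz)
end

section
/- Let M be a two-generated locally cyclic module over a commutative ring R such that the natural homomorphism SL₂(R) → SL₂(R/ann(M)) is surjective. Then SL₂(R) acts transitively on the set of generating pairs of M. -/
open LocalizedModule


section helpers

variable {R M : Type*} [CommRing R] [AddCommGroup M] [Module R M] (S : Submonoid R)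

private lemma alg_smul_mk (r : R) (m : M) :
    algebraMap R (Localization S) r • (mk m 1 : LocalizedModule S M) = mk (r • m) 1 := by
  rw [← Localization.mk_one_eq_algebraMap, mk_smul_mk, one_mul]

private lemma mk_one_cancel {m m' : M} (h : (mk m 1 : LocalizedModule S M) = mk m' 1) :
    ∃ u : S, (u : R) • m = (u : R) • m' := by
  rw [mk_eq] at h
  obtain ⟨u, hu⟩ := h
  exact ⟨u, by simpa [Submonoid.smul_def] using hu⟩

private lemma mk_one_eq_zero {m : M} (h : (mk m 1 : LocalizedModule S M) = 0) :
    ∃ u : S, (u : R) • m = 0 := by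
  obtain ⟨u, hu⟩ := mk_one_cancel S (h.trans (zero_mk (1 : S)).symm)
  exact ⟨u, by simpa using hu⟩

private lemma mk_one_add (m m' : M) :
    (mk m 1 : LocalizedModule S M) + mk m' 1 = mk (m + m') 1 := by
  rw [mk_add_mk]; simp

private lemma span_pair_mk_top {m0 m1 : M} (h : Submodule.span R {m0, m1} = ⊤) :
    Submodule.span (Localization S) {(mk m0 1 : LocalizedModule S M), mk m1 1} = ⊤ := by
  rw [eq_top_iff]
  rintro z -
  refine induction_on (fun m s => ?_) z
  have hm : m ∈ Submodule.span R {m0, m1} := h ▸ Submodule.mem_top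
  obtain ⟨c, d, hcd⟩ := Submodule.mem_span_pair.mp hm
  have h1 : (mk m s : LocalizedModule S M)
      = Localization.mk 1 s • (algebraMap R (Localization S) c • mk m0 1
          + algebraMap R (Localization S) d • mk m1 1) := by
    rw [alg_smul_mk, alg_smul_mk, mk_one_add, mk_smul_mk, hcd, one_smul, mul_one]
  rw [h1]
  exact Submodule.smul_mem _ _ (Submodule.add_mem _
    (Submodule.smul_mem _ _ (Submodule.subset_span (Set.mem_insert _ _)))
    (Submodule.smul_mem _ _ (Submodule.subset_span (Set.mem_insert_of_mem _ rfl))))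

end helpers
section localmatrix
variable {R M : Type*} [CommRing R] [AddCommGroup M] [Module R M]

/-- In a module over a ring where `x` generates everything, solve the matrix problem. -/
private lemma claim_gen {A N : Type*} [CommRing A] [AddCommGroup N] [Module A N]
    (x y z0 z1 : N) (hgen : ∀ m : N, ∃ r : A, r • x = m)
    (hz : Submodule.span A {z0, z1} = ⊤) :
    ∃ a b c d : A, a • x + b • y = z0 ∧ c • x + d • y = z1 ∧
      (a * d - b * c - 1) • x = 0 ∧ (a * d - b * c - 1) • y = 0 := by
  obtain ⟨t, ht⟩ := hgen y
  obtain ⟨C, hC⟩ := hgen z0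
  obtain ⟨D, hD⟩ := hgen z1
  have hx : x ∈ Submodule.span A {z0, z1} := hz ▸ Submodule.mem_top
  obtain ⟨α, β, hαβ⟩ := Submodule.mem_span_pair.mp hx
  have key : (α * C + β * D) • x = x := by
    conv_rhs => rw [← hαβ, ← hC, ← hD]
    module
  refine ⟨C + t * β, -β, D - t * α, α, ?_, ?_, ?_, ?_⟩
  · rw [← hC, ← ht]; module
  · rw [← hD, ← ht]; module
  · have h1 : (C + t * β) * α - -β * (D - t * α) - 1 = (α * C + β * D) - 1 := by ring
    rw [h1, sub_smul, key, one_smul, sub_self]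
  · have h1 : (C + t * β) * α - -β * (D - t * α) - 1 = (α * C + β * D) - 1 := by ring
    rw [h1, ← ht, smul_comm, sub_smul, key, one_smul, sub_self, smul_zero]

private lemma exists_local_matrix (p : Ideal R) (hp : p.IsMaximal)
    (g : LocalizedModule p.primeCompl M)
    (hg : Submodule.span (Localization p.primeCompl) {g} = ⊤)
    (v0 v1 w0 w1 : M)
    (hv : Submodule.span R {v0, v1} = ⊤) (hw : Submodule.span R {w0, w1} = ⊤) :
    ∃ a b c d : Localization p.primeCompl,
      a • (mk v0 1 : LocalizedModule p.primeCompl M) + b • mk v1 1 = mk w0 1 ∧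
      c • (mk v0 1 : LocalizedModule p.primeCompl M) + d • mk v1 1 = mk w1 1 ∧
      (a * d - b * c - 1) • (mk v0 1 : LocalizedModule p.primeCompl M) = 0 ∧
      (a * d - b * c - 1) • (mk v1 1 : LocalizedModule p.primeCompl M) = 0 := by
  haveI := hp.isPrime
  set Rp := Localization p.primeCompl
  set v'0 : LocalizedModule p.primeCompl M := mk v0 1 with hv'0
  set v'1 : LocalizedModule p.primeCompl M := mk v1 1 with hv'1
  set w'0 : LocalizedModule p.primeCompl M := mk w0 1 with hw'0
  set w'1 : LocalizedModule p.primeCompl M := mk w1 1 with hw'1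
  have sv : Submodule.span Rp {v'0, v'1} = ⊤ := span_pair_mk_top _ hv
  have sw : Submodule.span Rp {w'0, w'1} = ⊤ := span_pair_mk_top _ hw
  have hmem : ∀ m : LocalizedModule p.primeCompl M, ∃ r : Rp, r • g = m := by
    intro m
    exact Submodule.mem_span_singleton.mp (hg ▸ Submodule.mem_top)
  obtain ⟨r0, hr0⟩ := hmem v'0
  obtain ⟨r1, hr1⟩ := hmem v'1
  by_cases h0 : IsUnit r0
  · have hgen : ∀ m : LocalizedModule p.primeCompl M, ∃ r : Rp, r • v'0 = m := by
      intro m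
      obtain ⟨r, hr⟩ := hmem m
      refine ⟨r * (↑h0.unit⁻¹ : Rp), ?_⟩
      rw [← hr0, smul_smul, mul_assoc, h0.val_inv_mul, mul_one, hr]
    obtain ⟨a, b, c, d, h1, h2, h3, h4⟩ := claim_gen v'0 v'1 w'0 w'1 hgen sw
    exact ⟨a, b, c, d, h1, h2, h3, h4⟩
  · by_cases h1 : IsUnit r1
    · have hgen : ∀ m : LocalizedModule p.primeCompl M, ∃ r : Rp, r • v'1 = m := by
        intro m
        obtain ⟨r, hr⟩ := hmem m
        refine ⟨r * (↑h1.unit⁻¹ : Rp), ?_⟩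
        rw [← hr1, smul_smul, mul_assoc, h1.val_inv_mul, mul_one, hr]
      have sw' : Submodule.span Rp {w'1, w'0} = ⊤ := by
        rwa [Set.pair_comm]
      obtain ⟨a, b, c, d, he1, he2, he3, he4⟩ := claim_gen v'1 v'0 w'1 w'0 hgen sw'
      refine ⟨d, c, b, a, ?_, ?_, ?_, ?_⟩
      · rw [add_comm]; exact he2
      · rw [add_comm]; exact he1
      · have : d * a - c * b = a * d - b * c := by ring
        rw [this]; exact he4
      · have : d * a - c * b = a * d - b * c := by ring
        rw [this]; exact he3
    · -- Nakayama: M_p = 0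
      have hmax0 : r0 ∈ IsLocalRing.maximalIdeal Rp := (IsLocalRing.mem_maximalIdeal _).mpr h0
      have hmax1 : r1 ∈ IsLocalRing.maximalIdeal Rp := (IsLocalRing.mem_maximalIdeal _).mpr h1
      have hle : (⊤ : Submodule Rp (LocalizedModule p.primeCompl M))
          ≤ (IsLocalRing.maximalIdeal Rp) • ⊤ := by
        conv_lhs => rw [← sv]
        rw [Submodule.span_le]
        rintro z hz
        simp only [Set.mem_insert_iff, Set.mem_singleton_iff] at hz
        rcases hz with rfl | rfl
        · rw [← hr0]; exact Submodule.smul_mem_smul hmax0 Submodule.mem_top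
        · rw [← hr1]; exact Submodule.smul_mem_smul hmax1 Submodule.mem_top
      have hbot : (⊤ : Submodule Rp (LocalizedModule p.primeCompl M)) = ⊥ :=
        Submodule.eq_bot_of_le_smul_of_le_jacobson_bot _ ⊤
          (hg ▸ Submodule.fg_span_singleton g) hle (IsLocalRing.maximalIdeal_le_jacobson ⊥)
      have hz : ∀ m : LocalizedModule p.primeCompl M, m = 0 := by
        intro m
        have : m ∈ (⊥ : Submodule Rp (LocalizedModule p.primeCompl M)) :=
          hbot ▸ Submodule.mem_top
        simpa using this
      exact ⟨1, 0, 0, 1, by rw [hz v'0, hz v'1, hz w'0]; simp,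
        by rw [hz v'0, hz v'1, hz w'1]; simp, by rw [hz v'0]; simp, by rw [hz v'1]; simp⟩

end localmatrix
/-- If `M` is a two-generated locally cyclic module and
`SL₂(R) → SL₂(R/ann(M))` is surjective, then `SL₂(R)` acts transitively on
generating pairs of `M`. -/
theorem sl2_transitive_of_locally_cyclic {R M : Type*} [CommRing R] [AddCommGroup M]
    [Module R M]
    (htwo : ∃ a b : M, Submodule.span R {a, b} = ⊤)
    (hloccyc : ∀ (p : Ideal R) (_ : p.IsMaximal),
      ∃ g : LocalizedModule p.primeCompl M,
        Submodule.span (Localization p.primeCompl) {g} = ⊤)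
    (hsurj : Function.Surjective
      (Matrix.SpecialLinearGroup.map (n := Fin 2)
        (Ideal.Quotient.mk ((⊤ : Submodule R M).annihilator))))
    (v w : Fin 2 → M)
    (hv : Submodule.span R (Set.range v) = ⊤)
    (hw : Submodule.span R (Set.range w) = ⊤) :
    ∃ σ : Matrix.SpecialLinearGroup (Fin 2) R,
      ∀ j, w j = ∑ i, (σ : Matrix (Fin 2) (Fin 2) R) i j • v i := by
  classical
  set I := (⊤ : Submodule R M).annihilator with hIdef
  have hpair : ∀ u : Fin 2 → M, Set.range u = {u 0, u 1} := by
    intro u; ext x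
    simp [Fin.exists_fin_two, eq_comm]
  rw [hpair v] at hv
  rw [hpair w] at hw
  -- annihilator facts
  have Iz : ∀ r ∈ I, ∀ m : M, r • m = 0 := fun r hr m =>
    Submodule.mem_annihilator.mp hr m Submodule.mem_top
  have memI : ∀ r : R, r • v 0 = 0 → r • v 1 = 0 → r ∈ I := by
    intro r h0 h1
    rw [hIdef, Submodule.mem_annihilator]
    intro n _
    have hn : n ∈ Submodule.span R {v 0, v 1} := hv ▸ Submodule.mem_top
    have hle : Submodule.span R {v 0, v 1} ≤ LinearMap.ker (LinearMap.lsmul R M r) := by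
      rw [Submodule.span_le]
      rintro z hz
      simp only [Set.mem_insert_iff, Set.mem_singleton_iff] at hz
      rcases hz with rfl | rfl
      · simpa [LinearMap.mem_ker] using h0
      · simpa [LinearMap.mem_ker] using h1
    simpa [LinearMap.mem_ker] using hle hn
  -- initial coefficients
  obtain ⟨a₀, b₀, hA⟩ := Submodule.mem_span_pair.mp
    (show w 0 ∈ Submodule.span R {v 0, v 1} from hv.symm ▸ Submodule.mem_top)
  obtain ⟨c₀, d₀, hC⟩ := Submodule.mem_span_pair.mp
    (show w 1 ∈ Submodule.span R {v 0, v 1} from hv.symm ▸ Submodule.mem_top)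
  -- relation kernel and the two linear forms
  let e : R × R →ₗ[R] M :=
    { toFun := fun x => x.1 • v 0 + x.2 • v 1
      map_add' := by intro x y; simp only [Prod.fst_add, Prod.snd_add, add_smul]; abel
      map_smul' := by intro r x; simp [smul_add, mul_smul] }
  let Kk : Submodule R (R × R) := LinearMap.ker e
  have hKk : ∀ k : R × R, k ∈ Kk ↔ k.1 • v 0 + k.2 • v 1 = 0 := by
    intro k; exact LinearMap.mem_ker
  let φ : R × R →ₗ[R] R :=
    { toFun := fun x => x.1 * d₀ - x.2 * c₀
      map_add' := by intro x y; simp only [Prod.fst_add, Prod.snd_add]; ring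
      map_smul' := by intro r x; simp only [Prod.smul_fst, Prod.smul_snd, smul_eq_mul,
        RingHom.id_apply]; ring }
  let ψ : R × R →ₗ[R] R :=
    { toFun := fun x => a₀ * x.2 - b₀ * x.1
      map_add' := by intro x y; simp only [Prod.fst_add, Prod.snd_add]; ring
      map_smul' := by intro r x; simp only [Prod.smul_fst, Prod.smul_snd, smul_eq_mul,
        RingHom.id_apply]; ring }
  let L : Ideal R := (Submodule.map φ Kk ⊔ Submodule.map ψ Kk) ⊔ I
  have hcross : ∀ k k' : R × R, k ∈ Kk → k' ∈ Kk → k.1 * k'.2 - k.2 * k'.1 ∈ I := by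
    intro k k' hk hk'
    have hk0 : k.1 • v 0 + k.2 • v 1 = 0 := (hKk k).mp hk
    have hk'0 : k'.1 • v 0 + k'.2 • v 1 = 0 := (hKk k').mp hk'
    apply memI
    · have h : (k.1 * k'.2 - k.2 * k'.1) • v 0
          = k'.2 • (k.1 • v 0 + k.2 • v 1) - k.2 • (k'.1 • v 0 + k'.2 • v 1) := by module
      rw [h, hk0, hk'0, smul_zero, smul_zero, sub_self]
    · have h : (k.1 * k'.2 - k.2 * k'.1) • v 1
          = k.1 • (k'.1 • v 0 + k'.2 • v 1) - k'.1 • (k.1 • v 0 + k.2 • v 1) := by module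
      rw [h, hk0, hk'0, smul_zero, smul_zero, sub_self]
  -- local statement
  have hloc : ∀ (p : Ideal R), p.IsMaximal →
      ∃ s : R, s ∉ p ∧ s * (1 - (a₀ * d₀ - b₀ * c₀)) ∈ L := by
    intro p hp
    haveI := hp.isPrime
    obtain ⟨g, hg⟩ := hloccyc p hp
    obtain ⟨a, b, c, d, heq1, heq2, hz0, hz1⟩ :=
      exists_local_matrix p hp g hg (v 0) (v 1) (w 0) (w 1) hv hw
    obtain ⟨s, hs⟩ := IsLocalization.exist_integer_multiples p.primeCompl
      (Finset.univ : Finset (Fin 4)) ![a, b, c, d]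
    obtain ⟨A, hA'⟩ := hs 0 (Finset.mem_univ _)
    obtain ⟨B, hB'⟩ := hs 1 (Finset.mem_univ _)
    obtain ⟨C', hC'⟩ := hs 2 (Finset.mem_univ _)
    obtain ⟨D, hD'⟩ := hs 3 (Finset.mem_univ _)
    simp only [Matrix.cons_val_zero, Matrix.cons_val_one, Matrix.head_cons,
      Matrix.cons_val_two, Matrix.tail_cons, Matrix.cons_val_three] at hA' hB' hC' hD'
    -- hA' : algebraMap R Rp A = (s:R) • a  etc.
    have hsa : algebraMap R (Localization p.primeCompl) (s : R) * a
        = algebraMap R (Localization p.primeCompl) A := by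
      rw [hA', Algebra.smul_def]
    have hsb : algebraMap R (Localization p.primeCompl) (s : R) * b
        = algebraMap R (Localization p.primeCompl) B := by
      rw [hB', Algebra.smul_def]
    have hsc : algebraMap R (Localization p.primeCompl) (s : R) * c
        = algebraMap R (Localization p.primeCompl) C' := by
      rw [hC', Algebra.smul_def]
    have hsd : algebraMap R (Localization p.primeCompl) (s : R) * d
        = algebraMap R (Localization p.primeCompl) D := by
      rw [hD', Algebra.smul_def]
    -- clear denominators in the two generation equations
    have E1 : (LocalizedModule.mk (A • v 0 + B • v 1) 1 :
        LocalizedModule p.primeCompl M) = LocalizedModule.mk ((s : R) • w 0) 1 := by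
      have h := congrArg
        (fun z => algebraMap R (Localization p.primeCompl) (s : R) • z) heq1
      simp only [smul_add, smul_smul] at h
      rw [hsa, hsb, alg_smul_mk, alg_smul_mk, alg_smul_mk, mk_one_add] at h
      exact h
    have E2 : (LocalizedModule.mk (C' • v 0 + D • v 1) 1 :
        LocalizedModule p.primeCompl M) = LocalizedModule.mk ((s : R) • w 1) 1 := by
      have h := congrArg
        (fun z => algebraMap R (Localization p.primeCompl) (s : R) • z) heq2
      simp only [smul_add, smul_smul] at h
      rw [hsc, hsd, alg_smul_mk, alg_smul_mk, alg_smul_mk, mk_one_add] at h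
      exact h
    obtain ⟨u1, hu1⟩ := mk_one_cancel _ E1
    obtain ⟨u2, hu2⟩ := mk_one_cancel _ E2
    -- clear denominators in the determinant conditions
    have hdet : algebraMap R (Localization p.primeCompl) (A * D - B * C' - (s:R) * (s:R))
        = algebraMap R (Localization p.primeCompl) ((s:R) * (s:R)) * (a * d - b * c - 1) := by
      rw [map_sub, map_sub, map_mul, map_mul, map_mul, ← hsa, ← hsb, ← hsc, ← hsd]
      ring
    have hz0' : (LocalizedModule.mk ((A * D - B * C' - (s:R) * (s:R)) • v 0) 1 :
        LocalizedModule p.primeCompl M) = 0 := by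
      rw [← alg_smul_mk, hdet, mul_smul, hz0, smul_zero]
    have hz1' : (LocalizedModule.mk ((A * D - B * C' - (s:R) * (s:R)) • v 1) 1 :
        LocalizedModule p.primeCompl M) = 0 := by
      rw [← alg_smul_mk, hdet, mul_smul, hz1, smul_zero]
    obtain ⟨u3, hu3⟩ := mk_one_eq_zero _ hz0'
    obtain ⟨u4, hu4⟩ := mk_one_eq_zero _ hz1'
    -- memberships
    have hkK : ((u1 : R) * (A - (s:R) * a₀), (u1 : R) * (B - (s:R) * b₀)) ∈ Kk := by
      rw [hKk]
      have h : ((u1 : R) * (A - (s:R) * a₀)) • v 0 + ((u1 : R) * (B - (s:R) * b₀)) • v 1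
          = (u1 : R) • (A • v 0 + B • v 1)
            - (u1 : R) • ((s : R) • (a₀ • v 0 + b₀ • v 1)) := by module
      rw [h, hA, hu1, sub_self]
    have hk'K : ((u2 : R) * (C' - (s:R) * c₀), (u2 : R) * (D - (s:R) * d₀)) ∈ Kk := by
      rw [hKk]
      have h : ((u2 : R) * (C' - (s:R) * c₀)) • v 0 + ((u2 : R) * (D - (s:R) * d₀)) • v 1
          = (u2 : R) • (C' • v 0 + D • v 1)
            - (u2 : R) • ((s : R) • (c₀ • v 0 + d₀ • v 1)) := by module
      rw [h, hC, hu2, sub_self]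
    have hiE : (u3 : R) * (u4 : R) * (A * D - B * C' - (s:R) * (s:R)) ∈ I := by
      apply memI
      · have h : ((u3 : R) * (u4 : R) * (A * D - B * C' - (s:R) * (s:R))) • v 0
            = (u4 : R) • ((u3 : R) • ((A * D - B * C' - (s:R) * (s:R)) • v 0)) := by module
        rw [h, hu3, smul_zero]
      · have h : ((u3 : R) * (u4 : R) * (A * D - B * C' - (s:R) * (s:R))) • v 1
            = (u3 : R) • ((u4 : R) • ((A * D - B * C' - (s:R) * (s:R)) • v 1)) := by module
        rw [h, hu4, smul_zero]
    have m1 : ((u1 : R) * (A - (s:R) * a₀)) * d₀ - ((u1 : R) * (B - (s:R) * b₀)) * c₀ ∈ L :=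
      Submodule.mem_sup_left (Submodule.mem_sup_left ⟨_, hkK, rfl⟩)
    have m2 : a₀ * ((u2 : R) * (D - (s:R) * d₀)) - b₀ * ((u2 : R) * (C' - (s:R) * c₀)) ∈ L :=
      Submodule.mem_sup_left (Submodule.mem_sup_right ⟨_, hk'K, rfl⟩)
    have m3 : ((u1 : R) * (A - (s:R) * a₀)) * ((u2 : R) * (D - (s:R) * d₀))
        - ((u1 : R) * (B - (s:R) * b₀)) * ((u2 : R) * (C' - (s:R) * c₀)) ∈ L :=
      Submodule.mem_sup_right (hcross _ _ hkK hk'K)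
    have m4 : (u3 : R) * (u4 : R) * (A * D - B * C' - (s:R) * (s:R)) ∈ L :=
      Submodule.mem_sup_right hiE
    refine ⟨((s * s * u1 * u2 * u3 * u4 : p.primeCompl) : R),
      (s * s * u1 * u2 * u3 * u4 : p.primeCompl).2, ?_⟩
    have key : ((s * s * u1 * u2 * u3 * u4 : p.primeCompl) : R) * (1 - (a₀ * d₀ - b₀ * c₀))
        = ((u3:R) * (u4:R) * (s:R) * (u2:R))
            * (((u1 : R) * (A - (s:R) * a₀)) * d₀ - ((u1 : R) * (B - (s:R) * b₀)) * c₀)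
          + ((u3:R) * (u4:R) * (s:R) * (u1:R))
            * (a₀ * ((u2 : R) * (D - (s:R) * d₀)) - b₀ * ((u2 : R) * (C' - (s:R) * c₀)))
          + ((u3:R) * (u4:R))
            * (((u1 : R) * (A - (s:R) * a₀)) * ((u2 : R) * (D - (s:R) * d₀))
              - ((u1 : R) * (B - (s:R) * b₀)) * ((u2 : R) * (C' - (s:R) * c₀)))
          - ((u1:R) * (u2:R)) * ((u3 : R) * (u4 : R) * (A * D - B * C' - (s:R) * (s:R))) := by
      push_cast
      ring
    rw [key]
    exact Submodule.sub_mem _ (Submodule.add_mem _ (Submodule.add_mem _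
      (Ideal.mul_mem_left _ _ m1) (Ideal.mul_mem_left _ _ m2))
      (Ideal.mul_mem_left _ _ m3)) (Ideal.mul_mem_left _ _ m4)
  -- globalize
  have hxL : 1 - (a₀ * d₀ - b₀ * c₀) ∈ L := by
    have hQtop : L.colon (Submodule.span R {1 - (a₀ * d₀ - b₀ * c₀)}) = ⊤ := by
      by_contra hne
      obtain ⟨p, hp, hle⟩ := Ideal.exists_le_maximal _ hne
      obtain ⟨s, hsp, hs⟩ := hloc p hp
      have hmem : s ∈ L.colon (Submodule.span R {1 - (a₀ * d₀ - b₀ * c₀)}) :=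
        Submodule.mem_colon_span_singleton.mpr (by simpa [smul_eq_mul] using hs)
      exact hsp (hle hmem)
    have h1 : (1 : R) ∈ L.colon (Submodule.span R {1 - (a₀ * d₀ - b₀ * c₀)}) :=
      hQtop ▸ Submodule.mem_top
    simpa using Submodule.mem_colon_span_singleton.mp h1
  obtain ⟨y, hy, z, hz, hyz⟩ := Submodule.mem_sup.mp hxL
  obtain ⟨y1, hy1, y2, hy2, hy12⟩ := Submodule.mem_sup.mp hy
  obtain ⟨k, hkK, rfl⟩ := hy1
  obtain ⟨k', hk'K, rfl⟩ := hy2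
  have hx : (k.1 * d₀ - k.2 * c₀) + (a₀ * k'.2 - b₀ * k'.1) + z
      = 1 - (a₀ * d₀ - b₀ * c₀) := by
    rw [← hyz, ← hy12]; rfl
  -- the final coefficients
  have hdetI : (a₀ + k.1) * (d₀ + k'.2) - (b₀ + k.2) * (c₀ + k'.1) - 1 ∈ I := by
    have hcr := hcross k k' hkK hk'K
    have heq : (a₀ + k.1) * (d₀ + k'.2) - (b₀ + k.2) * (c₀ + k'.1) - 1
        = (k.1 * k'.2 - k.2 * k'.1) - z := by linear_combination hx
    rw [heq]
    exact Submodule.sub_mem _ hcr hz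
  have hk0 : k.1 • v 0 + k.2 • v 1 = 0 := (hKk k).mp hkK
  have hk'0 : k'.1 • v 0 + k'.2 • v 1 = 0 := (hKk k').mp hk'K
  have hE1 : (a₀ + k.1) • v 0 + (b₀ + k.2) • v 1 = w 0 := by
    have h : (a₀ + k.1) • v 0 + (b₀ + k.2) • v 1
        = (a₀ • v 0 + b₀ • v 1) + (k.1 • v 0 + k.2 • v 1) := by module
    rw [h, hA, hk0, add_zero]
  have hE2 : (c₀ + k'.1) • v 0 + (d₀ + k'.2) • v 1 = w 1 := by
    have h : (c₀ + k'.1) • v 0 + (d₀ + k'.2) • v 1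
        = (c₀ • v 0 + d₀ • v 1) + (k'.1 • v 0 + k'.2 • v 1) := by module
    rw [h, hC, hk'0, add_zero]
  -- lift to SL₂
  set Amat : Matrix (Fin 2) (Fin 2) R :=
    !![a₀ + k.1, c₀ + k'.1; b₀ + k.2, d₀ + k'.2] with hAmat
  have hAdet : ((Ideal.Quotient.mk I).mapMatrix Amat).det = 1 := by
    rw [← RingHom.map_det, hAmat, Matrix.det_fin_two_of, ← map_one (Ideal.Quotient.mk I),
      Ideal.Quotient.mk_eq_mk_iff_sub_mem]
    have heq : (a₀ + k.1) * (d₀ + k'.2) - (c₀ + k'.1) * (b₀ + k.2) - 1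
        = (a₀ + k.1) * (d₀ + k'.2) - (b₀ + k.2) * (c₀ + k'.1) - 1 := by ring
    rw [heq]
    exact hdetI
  obtain ⟨σ, hσ⟩ := hsurj ⟨(Ideal.Quotient.mk I).mapMatrix Amat, hAdet⟩
  have hent : ∀ i j, (σ : Matrix (Fin 2) (Fin 2) R) i j - Amat i j ∈ I := by
    intro i j
    rw [← Ideal.Quotient.eq]
    have h := congrArg
      (fun g : Matrix.SpecialLinearGroup (Fin 2) (R ⧸ I) =>
        (g : Matrix (Fin 2) (Fin 2) (R ⧸ I)) i j) hσ
    simpa [Matrix.SpecialLinearGroup.map_apply_coe] using h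
  have hsw : ∀ (r r' : R) (m : M), r - r' ∈ I → r • m = r' • m := by
    intro r r' m hr
    have h := Iz _ hr m
    rw [sub_smul, sub_eq_zero] at h
    exact h
  refine ⟨σ, ?_⟩
  intro j
  rw [Fin.sum_univ_two]
  fin_cases j
  · show w 0 = (σ : Matrix (Fin 2) (Fin 2) R) 0 0 • v 0
        + (σ : Matrix (Fin 2) (Fin 2) R) 1 0 • v 1
    rw [hsw _ _ _ (hent 0 0), hsw _ _ _ (hent 1 0)]
    have e00 : Amat 0 0 = a₀ + k.1 := by simp [hAmat]
    have e10 : Amat 1 0 = b₀ + k.2 := by simp [hAmat]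
    rw [e00, e10]
    exact hE1.symm
  · show w 1 = (σ : Matrix (Fin 2) (Fin 2) R) 0 1 • v 0
        + (σ : Matrix (Fin 2) (Fin 2) R) 1 1 • v 1
    rw [hsw _ _ _ (hent 0 1), hsw _ _ _ (hent 1 1)]
    have e01 : Amat 0 1 = c₀ + k'.1 := by simp [hAmat]
    have e11 : Amat 1 1 = d₀ + k'.2 := by simp [hAmat]
    rw [e01, e11]
    exact hE2.symm
end

section
/- Let I be an ideal of a commutative ring R generated by two regular elements a and b. Then the second Fitting ideal Fitt₁(I) equals I·I⁻¹, where I⁻¹ = {x ∈ K(R) : xI ⊆ R} and K(R) is the total ring of quotients of R. -/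
/-- The second Fitting ideal of the ideal generated by `a` and `b`, computed from the
presentation associated with the generating pair `(a, b)`: it is the ideal generated by
all coefficients involved in a relation `r * a + s * b = 0`. -/
def relFittingIdeal {R : Type*} [CommRing R] (a b : R) : Ideal R :=
  Ideal.span {r : R | (∃ s, r * a + s * b = 0) ∨ (∃ s, s * a + r * b = 0)}

/-- If `I` is an ideal generated by two regular elements `a`, `b`, then
`Fitt₁(I) = I · I⁻¹`, where `I⁻¹ = {x ∈ K(R) | x I ⊆ R}` and `K(R)` is the total ring
of quotients (the equality is stated between the corresponding `R`-submodules of `K(R)`;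
note `R → K(R)` is injective). -/
theorem fittingIdeal_eq_mul_inv {R : Type*} [CommRing R] (a b : R)
    (ha : a ∈ nonZeroDivisors R) (hb : b ∈ nonZeroDivisors R)
    (I : Ideal R) (hI : I = Ideal.span {a, b}) :
    Submodule.map (Algebra.linearMap R (FractionRing R)) (relFittingIdeal a b) =
      Submodule.map (Algebra.linearMap R (FractionRing R)) I *
        ((1 : Submodule R (FractionRing R)) /
          Submodule.map (Algebra.linearMap R (FractionRing R)) I) := by
  subst hI
  classical
  set K := FractionRing R with hK
  set φ := algebraMap R K with hφ
  have hinj : Function.Injective φ := IsFractionRing.injective R K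
  have hua : IsUnit (φ a) := IsLocalization.map_units K ⟨a, ha⟩
  have hub : IsUnit (φ b) := IsLocalization.map_units K ⟨b, hb⟩
  have hmapI : Submodule.map (Algebra.linearMap R K) (Ideal.span ({a, b} : Set R)) =
      Submodule.span R {φ a, φ b} := by
    rw [Ideal.span, Submodule.map_span]
    congr 1
    simp [Set.image_insert_eq, hφ]
  have haI : φ a ∈ Submodule.map (Algebra.linearMap R K) (Ideal.span ({a, b} : Set R)) :=
    ⟨a, Ideal.subset_span (by simp), rfl⟩
  have hbI : φ b ∈ Submodule.map (Algebra.linearMap R K) (Ideal.span ({a, b} : Set R)) :=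
    ⟨b, Ideal.subset_span (by simp), rfl⟩
  have hdiv : ∀ x : K, x * φ a ∈ (1 : Submodule R K) → x * φ b ∈ (1 : Submodule R K) →
      x ∈ (1 : Submodule R K) / Submodule.map (Algebra.linearMap R K) (Ideal.span ({a, b} : Set R)) := by
    intro x h1 h2
    rw [Submodule.mem_div_iff_forall_mul_mem]
    intro y hy
    rw [hmapI] at hy
    have hle : Submodule.span R {φ a, φ b} ≤ Submodule.comap (LinearMap.mulLeft R x) 1 := by
      rw [Submodule.span_le]
      rintro z hz
      rcases hz with rfl | rfl
      · exact h1
      · exact h2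
    exact hle hy
  apply le_antisymm
  · rw [relFittingIdeal, Ideal.span, Submodule.map_span, Submodule.span_le]
    rintro _ ⟨r, hr, rfl⟩
    have hφr : (Algebra.linearMap R K) r = φ r := rfl
    rw [hφr]
    rcases hr with ⟨s, hrs⟩ | ⟨s, hrs⟩
    · -- r * a + s * b = 0, use x = b⁻¹ r
      set x : K := (↑hub.unit⁻¹ : K) * φ r with hx
      have hbinv : (↑hub.unit⁻¹ : K) * φ b = 1 := by
        simp
      have hxb : x * φ b = φ r := by
        rw [hx]; linear_combination φ r * hbinv
      have hkey : φ r * φ a = -(φ s * φ b) := by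
        have := congrArg φ hrs
        rw [map_add, map_mul, map_mul, map_zero] at this
        linear_combination this
      have hxa : x * φ a = φ (-s) := by
        rw [hx, map_neg]
        linear_combination (↑hub.unit⁻¹ : K) * hkey - φ s * hbinv
      have hx1 : x ∈ (1 : Submodule R K) / Submodule.map (Algebra.linearMap R K)
          (Ideal.span ({a, b} : Set R)) := by
        apply hdiv
        · rw [hxa]; exact Submodule.mem_one.mpr ⟨-s, rfl⟩
        · rw [hxb]; exact Submodule.mem_one.mpr ⟨r, rfl⟩
      show φ r ∈ _
      rw [← hxb, mul_comm x (φ b)]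
      exact Submodule.mul_mem_mul hbI hx1
    · -- s * a + r * b = 0, use x = a⁻¹ r
      set x : K := (↑hua.unit⁻¹ : K) * φ r with hx
      have hainv : (↑hua.unit⁻¹ : K) * φ a = 1 := by
        simp
      have hxa : x * φ a = φ r := by
        rw [hx]; linear_combination φ r * hainv
      have hkey : φ r * φ b = -(φ s * φ a) := by
        have := congrArg φ hrs
        rw [map_add, map_mul, map_mul, map_zero] at this
        linear_combination this
      have hxb : x * φ b = φ (-s) := by
        rw [hx, map_neg]
        linear_combination (↑hua.unit⁻¹ : K) * hkey - φ s * hainv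
      have hx1 : x ∈ (1 : Submodule R K) / Submodule.map (Algebra.linearMap R K)
          (Ideal.span ({a, b} : Set R)) := by
        apply hdiv
        · rw [hxa]; exact Submodule.mem_one.mpr ⟨r, rfl⟩
        · rw [hxb]; exact Submodule.mem_one.mpr ⟨-s, rfl⟩
      show φ r ∈ _
      rw [← hxa, mul_comm x (φ a)]
      exact Submodule.mul_mem_mul haI hx1
  · rw [Submodule.mul_le]
    intro m hm n hn
    have hna : n * φ a ∈ (1 : Submodule R K) :=
      (Submodule.mem_div_iff_forall_mul_mem.mp hn) _ haI
    have hnb : n * φ b ∈ (1 : Submodule R K) :=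
      (Submodule.mem_div_iff_forall_mul_mem.mp hn) _ hbI
    obtain ⟨r, hr'⟩ := Submodule.mem_one.mp hna
    obtain ⟨s, hs'⟩ := Submodule.mem_one.mp hnb
    have hrel : r * b = s * a := by
      apply hinj
      rw [map_mul, map_mul, hr', hs']
      ring
    have hle : Submodule.span R ({φ a, φ b} : Set K) ≤
        Submodule.comap (LinearMap.mulRight R n)
          (Submodule.map (Algebra.linearMap R K) (relFittingIdeal a b)) := by
      rw [Submodule.span_le]
      rintro z hz
      rcases hz with rfl | rfl
      · -- φ a * n = φ r
        have hmem : r ∈ relFittingIdeal a b :=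
          Ideal.subset_span (Or.inr ⟨-s, by linear_combination hrel⟩)
        refine ⟨r, hmem, ?_⟩
        show φ r = φ a * n
        rw [hr', mul_comm]
      · have hmem : s ∈ relFittingIdeal a b :=
          Ideal.subset_span (Or.inl ⟨-r, by linear_combination -hrel⟩)
        refine ⟨s, hmem, ?_⟩
        show φ s = φ b * n
        rw [hs', mul_comm]
    have := hle (hmapI ▸ hm)
    exact this
end

section
/- Let I be a two-generated ideal of a commutative ring R with Fitt₁(I) = I·I⁻¹ (e.g., I generated by two regular elements). Let m, m' be generating pairs of I. Then m ∼_{SL₂(R)} m' if and only if det_m(m') = 1 in R/Fitt₁(I). Consequently the determinant map induces an injection of V₂(I)/SL₂(R) into (R/Fitt₁(I))^×. -/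
/-- Let `I` be a two-generated ideal with `Fitt₁(I) = I · I⁻¹`
(stated in the total quotient ring `K(R) = FractionRing R`). Two generating pairs
`v, w` of `I` are `SL₂(R)`-equivalent iff `det_v(w) = 1`, i.e. iff some matrix `A`
carries `v` to `w` with `det A ≡ 1 mod Fitt₁(I)`.  Consequently the determinant map
induces an injection of `V₂(I)/SL₂(R)` into `(R/Fitt₁(I))ˣ`. -/
theorem sl2_orbit_iff_det_one {R : Type*} [CommRing R] (I : Ideal R)
    (v w : Fin 2 → R)
    (hv : Ideal.span {v 0, v 1} = I) (hw : Ideal.span {w 0, w 1} = I)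
    (hFitt : Submodule.map (Algebra.linearMap R (FractionRing R))
        (relFittingIdeal (v 0) (v 1)) =
      Submodule.map (Algebra.linearMap R (FractionRing R)) I *
        ((1 : Submodule R (FractionRing R)) /
          Submodule.map (Algebra.linearMap R (FractionRing R)) I)) :
    (∃ σ : Matrix.SpecialLinearGroup (Fin 2) R,
        ∀ j, w j = ∑ i, (σ : Matrix (Fin 2) (Fin 2) R) i j * v i) ↔
      (∃ A : Matrix (Fin 2) (Fin 2) R,
        (∀ j, w j = ∑ i, A i j * v i) ∧ A.det - 1 ∈ relFittingIdeal (v 0) (v 1)) := by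
  constructor
  · rintro ⟨σ, hσ⟩
    refine ⟨σ, hσ, ?_⟩
    have : ((σ : Matrix (Fin 2) (Fin 2) R)).det = 1 := σ.2
    rw [this]
    simpa using (relFittingIdeal (v 0) (v 1)).zero_mem
  · rintro ⟨A, hA, hdet⟩
    set K := FractionRing R with hK
    set f : R →+* K := algebraMap R K with hf
    have hinj : Function.Injective f := IsFractionRing.injective R K
    set imI : Submodule R K := Submodule.map (Algebra.linearMap R K) I with himI
    set invI : Submodule R K := (1 : Submodule R K) / imI with hinvI
    have h1 : (1 : R) - A.det ∈ relFittingIdeal (v 0) (v 1) := by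
      have := (relFittingIdeal (v 0) (v 1)).neg_mem hdet
      simpa using this
    have hδmem : f (1 - A.det) ∈ imI * invI := by
      rw [himI, hinvI, ← hFitt]
      exact Submodule.mem_map_of_mem h1
    have hvI : ∀ i, v i ∈ I := by
      intro i
      rw [← hv]
      fin_cases i
      · exact Ideal.subset_span (Or.inl rfl)
      · exact Ideal.subset_span (Or.inr rfl)
    -- express f (1 - det A) as f(w 0) * t + f(w 1) * s with t, s ∈ invI
    have hP : ∃ t ∈ invI, ∃ s ∈ invI, f (1 - A.det) = f (w 0) * t + f (w 1) * s := by
      refine Submodule.mul_induction_on hδmem ?_ ?_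
      · rintro x hx y hy
        obtain ⟨a, haI, rfl⟩ := Submodule.mem_map.mp hx
        rw [← hw] at haI
        obtain ⟨c, d, hcd⟩ := Ideal.mem_span_pair.mp haI
        refine ⟨c • y, Submodule.smul_mem _ _ hy, d • y, Submodule.smul_mem _ _ hy, ?_⟩
        rw [← hcd]
        simp only [Algebra.linearMap_apply, Algebra.smul_def, map_add, map_mul]
        ring
      · rintro x y ⟨t, ht, s, hs, hx⟩ ⟨t', ht', s', hs', hy⟩
        refine ⟨t + t', Submodule.add_mem _ ht ht', s + s', Submodule.add_mem _ hs hs', ?_⟩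
        rw [hx, hy]; ring
    obtain ⟨t, ht, s, hs, hδ⟩ := hP
    -- pull back the products with v
    have hmul : ∀ x ∈ invI, ∀ i, ∃ r : R, f r = x * f (v i) := by
      intro x hx i
      have hmem : x * f (v i) ∈ (1 : Submodule R K) := by
        refine Submodule.mem_div_iff_forall_mul_mem.mp hx _ ?_
        exact ⟨v i, hvI i, rfl⟩
      obtain ⟨r, hr⟩ := (Submodule.mem_one).mp hmem
      exact ⟨r, hr⟩
    obtain ⟨a, ha⟩ := hmul s hs 1
    obtain ⟨b, hb⟩ := hmul s hs 0
    obtain ⟨c, hc⟩ := hmul t ht 1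
    obtain ⟨d, hd⟩ := hmul t ht 0
    -- the corrected matrix
    set M : Matrix (Fin 2) (Fin 2) R :=
      !![A 0 0 + a, A 0 1 - c; A 1 0 - b, A 1 1 + d] with hM
    have hA0 : w 0 = A 0 0 * v 0 + A 1 0 * v 1 := by
      simpa [Fin.sum_univ_two] using hA 0
    have hA1 : w 1 = A 0 1 * v 0 + A 1 1 * v 1 := by
      simpa [Fin.sum_univ_two] using hA 1
    have hab : a * v 0 = b * v 1 := by
      apply hinj
      rw [map_mul, map_mul, ha, hb]; ring
    have hcd : c * v 0 = d * v 1 := by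
      apply hinj
      rw [map_mul, map_mul, hc, hd]; ring
    have hdet1 : M.det = 1 := by
      apply hinj
      have hδ' : 1 - (f (A 0 0) * f (A 1 1) - f (A 0 1) * f (A 1 0)) =
          (f (A 0 0) * f (v 0) + f (A 1 0) * f (v 1)) * t +
            (f (A 0 1) * f (v 0) + f (A 1 1) * f (v 1)) * s := by
        have := hδ
        rw [map_sub, map_one, Matrix.det_fin_two, map_sub, map_mul, map_mul] at this
        rw [this, congrArg f hA0, congrArg f hA1]
        simp only [map_add, map_mul]
      rw [hM, Matrix.det_fin_two_of, map_one, map_sub, map_mul, map_mul, map_add, map_add,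
        map_sub, map_sub, ha, hb, hc, hd]
      linear_combination -hδ'
    refine ⟨⟨M, hdet1⟩, ?_⟩
    intro j
    fin_cases j
    · rw [Fin.sum_univ_two]
      show w 0 = M 0 0 * v 0 + M 1 0 * v 1
      have e0 : M 0 0 = A 0 0 + a := by simp [hM]
      have e1 : M 1 0 = A 1 0 - b := by simp [hM]
      rw [e0, e1]
      linear_combination hA0 - hab
    · rw [Fin.sum_univ_two]
      show w 1 = M 0 1 * v 0 + M 1 1 * v 1
      have e0 : M 0 1 = A 0 1 - c := by simp [hM]
      have e1 : M 1 1 = A 1 1 + d := by simp [hM]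
      rw [e0, e1]
      linear_combination hA1 + hcd
end

section
/- Let I be a two-generated ideal of R, m, m' generating pairs of I with mA = m' for a 2×2 matrix A over R, and let N_m be the set of 2×2 matrices N over R with mN = (0,0). Define Φ_A(N) = det(A+N) − det(A). Then I·I⁻¹ ⊆ Φ_A(N_m) ⊆ Fitt₁(I), and if I is faithful then Φ_A(N_m) is an ideal of R. -/
/-- Let `v, w` be generating pairs of a two-generated ideal `I`, and `A`
a matrix with `v A = w`. Let `𝒩_v` be the set of matrices `N` with `v N = 0`, and
`Φ_A(N) = det (A + N) - det A`. Then `I · I⁻¹ ⊆ Φ_A(𝒩_v) ⊆ Fitt₁(I)` (the left-hand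
inclusion stated in the total quotient ring `K(R)`), and if `I` is faithful then
`Φ_A(𝒩_v)` is an ideal of `R`. -/
theorem phi_between_mul_inv_and_fitting {R : Type*} [CommRing R] (I : Ideal R)
    (v w : Fin 2 → R)
    (hv : Ideal.span {v 0, v 1} = I) (hw : Ideal.span {w 0, w 1} = I)
    (A : Matrix (Fin 2) (Fin 2) R) (hA : ∀ j, w j = ∑ i, A i j * v i) :
    (∀ r : R,
        algebraMap R (FractionRing R) r ∈
          Submodule.map (Algebra.linearMap R (FractionRing R)) I *
            ((1 : Submodule R (FractionRing R)) /
              Submodule.map (Algebra.linearMap R (FractionRing R)) I) →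
        ∃ N : Matrix (Fin 2) (Fin 2) R,
          (∀ j, (∑ i, N i j * v i) = 0) ∧ (A + N).det - A.det = r) ∧
    (∀ N : Matrix (Fin 2) (Fin 2) R, (∀ j, (∑ i, N i j * v i) = 0) →
        (A + N).det - A.det ∈ relFittingIdeal (v 0) (v 1)) ∧
    ((∀ r : R, (∀ x ∈ I, r * x = 0) → r = 0) →
      ∃ J : Ideal R, (J : Set R) =
        {r : R | ∃ N : Matrix (Fin 2) (Fin 2) R,
          (∀ j, (∑ i, N i j * v i) = 0) ∧ (A + N).det - A.det = r}) := by
  classical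
  set K := FractionRing R
  set f := algebraMap R K with hf
  have finj : Function.Injective f := IsFractionRing.injective R K
  have hv0 : v 0 ∈ I := by rw [← hv]; exact Ideal.subset_span (by simp)
  have hv1 : v 1 ∈ I := by rw [← hv]; exact Ideal.subset_span (by simp)
  set M := Submodule.map (Algebra.linearMap R K) I with hM
  set D := (1 : Submodule R K) / M with hD
  refine ⟨?_, ?_, ?_⟩
  · -- Part 1 : I * I⁻¹ ⊆ Φ_A(𝒩_v)
    intro r hr
    -- Step A: write f r = q0 * f (w 0) + q1 * f (w 1) with q0, q1 ∈ D
    have stepA : ∀ t ∈ M * D, ∃ q0 q1, q0 ∈ D ∧ q1 ∈ D ∧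
        t = q0 * f (w 0) + q1 * f (w 1) := by
      intro t ht
      refine Submodule.mul_induction_on ht ?_ ?_
      · rintro m hm d hd
        obtain ⟨x, hxI, hx⟩ := hm
        rw [← hw] at hxI
        obtain ⟨a, b, hab⟩ := Ideal.mem_span_pair.mp hxI
        refine ⟨a • d, b • d, D.smul_mem a hd, D.smul_mem b hd, ?_⟩
        have : m = f x := hx.symm
        rw [this, ← hab]
        simp only [Algebra.smul_def, map_add, map_mul]
        ring
      · rintro x y ⟨q0, q1, h0, h1, hx⟩ ⟨p0, p1, g0, g1, hy⟩
        exact ⟨q0 + p0, q1 + p1, D.add_mem h0 g0, D.add_mem h1 g1, by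
          rw [hx, hy]; ring⟩
    obtain ⟨q0, q1, hq0, hq1, hqr⟩ := stepA _ hr
    set q : Fin 2 → K := ![q0, q1] with hq
    have hqD : ∀ j, q j ∈ D := by
      intro j; fin_cases j <;> simpa [hq]
    -- Step B: q j * f (v i) is in the image of f
    have stepB : ∀ i j : Fin 2, ∃ b : R, f b = q j * f (v i) := by
      intro i j
      have hvi : v i ∈ I := by fin_cases i <;> assumption
      have : q j * f (v i) ∈ (1 : Submodule R K) := by
        refine Submodule.mem_div_iff_forall_mul_mem.mp (hqD j) _ ?_
        exact ⟨v i, hvi, rfl⟩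
      exact Submodule.mem_one.mp this
    choose b hb using stepB
    -- Step C: the matrix N
    set N : Matrix (Fin 2) (Fin 2) R := ![![b 1 1, -(b 1 0)], ![-(b 0 1), b 0 0]] with hN
    have hN00 : N 0 0 = b 1 1 := rfl
    have hN01 : N 0 1 = -(b 1 0) := rfl
    have hN10 : N 1 0 = -(b 0 1) := rfl
    have hN11 : N 1 1 = b 0 0 := rfl
    have r0 : (∑ i, N i 0 * v i) = 0 := by
      apply finj
      rw [Fin.sum_univ_two, map_add, map_mul, map_mul, map_zero,
        hN00, hN10, hb, map_neg, hb]
      ring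
    have r1 : (∑ i, N i 1 * v i) = 0 := by
      apply finj
      rw [Fin.sum_univ_two, map_add, map_mul, map_mul, map_zero,
        hN01, hN11, map_neg, hb, hb]
      ring
    have hrel : ∀ j, (∑ i, N i j * v i) = 0 := by
      intro j; fin_cases j; exacts [r0, r1]
    refine ⟨N, hrel, ?_⟩
    have hdetN : N 1 1 * N 0 0 - N 0 1 * N 1 0 = 0 := by
      apply finj
      rw [map_sub, map_mul, map_mul, map_zero, hN00, hN01, hN10, hN11,
        map_neg, map_neg, hb, hb, hb, hb]
      ring
    apply finj
    have expand : (A + N).det - A.det =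
        (A 0 0 * N 1 1 + A 1 0 * (-(N 0 1))) + (A 0 1 * (-(N 1 0)) + A 1 1 * N 0 0)
        + (N 1 1 * N 0 0 - N 0 1 * N 1 0) := by
      simp only [Matrix.det_fin_two, Matrix.add_apply]; ring
    rw [expand, hdetN, add_zero, hqr, hA 0, hA 1, hN00, hN01, hN10, hN11, neg_neg, neg_neg]
    simp only [Fin.sum_univ_two, map_add, map_mul, hb]
    have e0 : q 0 = q0 := rfl
    have e1 : q 1 = q1 := rfl
    rw [e0, e1]; ring
  · -- Part 2 : Φ_A(𝒩_v) ⊆ Fitt₁ I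
    intro N hrel
    have h0 := hrel 0
    have h1 := hrel 1
    rw [Fin.sum_univ_two] at h0 h1
    have mem0 : ∀ j, N 0 j ∈ relFittingIdeal (v 0) (v 1) := by
      intro j; apply Ideal.subset_span; left; exact ⟨N 1 j, by fin_cases j <;> assumption⟩
    have mem1 : ∀ j, N 1 j ∈ relFittingIdeal (v 0) (v 1) := by
      intro j; apply Ideal.subset_span; right; exact ⟨N 0 j, by fin_cases j <;> assumption⟩
    have expand : (A + N).det - A.det =
        N 0 0 * (A 1 1 + N 1 1) + N 1 1 * A 0 0 - (N 0 1 * (A 1 0 + N 1 0) + N 1 0 * A 0 1) := by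
      simp only [Matrix.det_fin_two, Matrix.add_apply]; ring
    rw [expand]
    refine sub_mem (add_mem ?_ ?_) (add_mem ?_ ?_) <;>
      exact Ideal.mul_mem_right _ _ (by first | exact mem0 _ | exact mem1 _)
  · -- Part 3 : faithfulness makes Φ_A(𝒩_v) an ideal
    intro hfaith
    -- key: det N = 0 for N ∈ 𝒩_v
    have hdet : ∀ N : Matrix (Fin 2) (Fin 2) R, (∀ j, (∑ i, N i j * v i) = 0) →
        N.det = 0 := by
      intro N hrel
      have h0 := hrel 0
      have h1 := hrel 1
      rw [Fin.sum_univ_two] at h0 h1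
      apply hfaith
      intro x hx
      rw [← hv] at hx
      obtain ⟨a, c, hac⟩ := Ideal.mem_span_pair.mp hx
      have d0 : N.det * v 0 = 0 := by
        rw [Matrix.det_fin_two]
        have e0 : N 0 0 * v 0 = -(N 1 0 * v 1) := by linear_combination h0
        have e1 : N 0 1 * v 0 = -(N 1 1 * v 1) := by linear_combination h1
        linear_combination N 1 1 * e0 - N 1 0 * e1
      have d1 : N.det * v 1 = 0 := by
        rw [Matrix.det_fin_two]
        have e0 : N 1 0 * v 1 = -(N 0 0 * v 0) := by linear_combination h0
        have e1 : N 1 1 * v 1 = -(N 0 1 * v 0) := by linear_combination h1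
        linear_combination N 0 0 * e1 - N 0 1 * e0
      calc N.det * x = a * (N.det * v 0) + c * (N.det * v 1) := by
            rw [← hac]; ring
        _ = 0 := by rw [d0, d1]; ring
    have hphi : ∀ N : Matrix (Fin 2) (Fin 2) R, (∀ j, (∑ i, N i j * v i) = 0) →
        (A + N).det - A.det =
          A 0 0 * N 1 1 + A 1 1 * N 0 0 - A 0 1 * N 1 0 - A 1 0 * N 0 1 := by
      intro N hrel
      have := hdet N hrel
      rw [Matrix.det_fin_two] at this
      simp only [Matrix.det_fin_two, Matrix.add_apply]
      linear_combination this
    refine ⟨{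
      carrier := {r : R | ∃ N : Matrix (Fin 2) (Fin 2) R,
        (∀ j, (∑ i, N i j * v i) = 0) ∧ (A + N).det - A.det = r}
      zero_mem' := ⟨0, by simp, by simp⟩
      add_mem' := ?_
      smul_mem' := ?_ }, rfl⟩
    · rintro x y ⟨N, hNrel, hNx⟩ ⟨N', hN'rel, hN'y⟩
      refine ⟨N + N', ?_, ?_⟩
      · intro j
        have := hNrel j
        have := hN'rel j
        simp only [Matrix.add_apply, add_mul, Finset.sum_add_distrib]
        rw [hNrel j, hN'rel j, add_zero]
      · rw [hphi _ (fun j => by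
          simp only [Matrix.add_apply, add_mul, Finset.sum_add_distrib, hNrel j, hN'rel j,
            add_zero]), ← hNx, ← hN'y, hphi N hNrel, hphi N' hN'rel]
        simp only [Matrix.add_apply]; ring
    · rintro c x ⟨N, hNrel, hNx⟩
      refine ⟨c • N, ?_, ?_⟩
      · intro j
        simp only [Matrix.smul_apply, smul_eq_mul, mul_assoc, ← Finset.mul_sum, hNrel j,
          mul_zero]
      · rw [hphi _ (fun j => by
          simp only [Matrix.smul_apply, smul_eq_mul, mul_assoc, ← Finset.mul_sum, hNrel j,
            mul_zero]), ← hNx, hphi N hNrel]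
        simp only [Matrix.smul_apply, smul_eq_mul]; ring
end

section
/- Let I be a two-generated ideal of R and suppose there exists a generating pair (a,b) of I such that the natural group homomorphism (R/(a:b))^× → (R/Fitt₁(I))^× is surjective, where (a:b) = {r ∈ R : rb ∈ Ra}. Then the map det_{(a,b)}: V₂(I) → (R/Fitt₁(I))^× is surjective. -/
/-- Let `(a, b)` be a generating pair of a two-generated ideal `I` such
that `(R/(a:b))ˣ → (R/Fitt₁(I))ˣ` is surjective (every unit of `R/Fitt₁(I)` lifts to an
element of `R` whose class mod `(a : b)` is a unit).  Then the determinant map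
`det_{(a,b)} : V₂(I) → (R/Fitt₁(I))ˣ` is surjective: every unit is `det A mod Fitt₁(I)`
for some matrix `A` carrying `(a, b)` to another generating pair of `I`. -/
theorem det_map_surjective {R : Type*} [CommRing R] (I : Ideal R) (a b : R)
    (hab : Ideal.span {a, b} = I)
    (hsurj : ∀ u : (R ⧸ relFittingIdeal a b)ˣ, ∃ r : R,
      Ideal.Quotient.mk (relFittingIdeal a b) r = (u : R ⧸ relFittingIdeal a b) ∧
      IsUnit (Ideal.Quotient.mk ((Ideal.span {a}).colon (Ideal.span {b})) r)) :
    ∀ u : (R ⧸ relFittingIdeal a b)ˣ,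
      ∃ (w : Fin 2 → R) (A : Matrix (Fin 2) (Fin 2) R),
        Ideal.span {w 0, w 1} = I ∧
        (∀ j, w j = ∑ i, A i j * ![a, b] i) ∧
        Ideal.Quotient.mk (relFittingIdeal a b) A.det = (u : R ⧸ relFittingIdeal a b) := by
  intro u
  obtain ⟨r, hr, hru⟩ := hsurj u
  -- extract s with r*s - 1 ∈ (a:b)
  obtain ⟨y, hy⟩ := isUnit_iff_exists_inv.mp hru
  obtain ⟨s, rfl⟩ := Ideal.Quotient.mk_surjective y
  have hmem : r * s - 1 ∈ (Ideal.span {a}).colon (Ideal.span {b}) := by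
    have h0 : Ideal.Quotient.mk ((Ideal.span {a}).colon (Ideal.span {b})) (r * s - 1) = 0 := by
      rw [map_sub, map_mul, hy, map_one, sub_self]
    exact (Ideal.Quotient.eq_zero_iff_mem).mp h0
  have hcol : (r * s - 1) * b ∈ Ideal.span ({a} : Set R) :=
    Ideal.mem_colon_span_singleton.mp hmem
  obtain ⟨c, hc⟩ := Ideal.mem_span_singleton'.mp hcol
  refine ⟨![a, r * b], ![![1, 0], ![0, r]], ?_, ?_, ?_⟩
  · apply le_antisymm
    · rw [Ideal.span_le]
      rintro x hx
      simp only [Set.mem_insert_iff, Set.mem_singleton_iff] at hx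
      rcases hx with h | h <;> rw [h]
      · show a ∈ I
        rw [← hab]; exact Ideal.subset_span (by simp)
      · show r * b ∈ I
        rw [← hab]
        exact Ideal.mul_mem_left _ r (Ideal.subset_span (by simp))
    · rw [← hab, Ideal.span_le]
      rintro x hx
      simp only [Set.mem_insert_iff, Set.mem_singleton_iff] at hx
      rcases hx with h | h <;> rw [h]
      · exact Ideal.subset_span (by simp)
      · -- b = s*(r*b) - c*a
        have hb : b = s * (r * b) + -c * a := by linear_combination hc
        have hmem2 : s * (r * b) + -c * a ∈ Ideal.span ({a, r * b} : Set R) :=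
          Ideal.add_mem _
            (Ideal.mul_mem_left _ s (Ideal.subset_span (by simp)))
            (Ideal.mul_mem_left _ (-c) (Ideal.subset_span (by simp)))
        rwa [← hb] at hmem2
  · intro j
    fin_cases j <;> simp [Fin.sum_univ_two]
  · have : Matrix.det ![![(1:R), 0], ![0, r]] = r := by
      exact (Matrix.det_fin_two_of (1:R) 0 0 r).trans (by simp)
    rw [this, hr]
end

section
/- Let R be a commutative ring such that R/Rr has stable rank 1 for every regular element r ∈ R (R is almost of stable rank 1), and let I be an ideal of R generated by two regular elements. Then the determinant map induces a bijection from V₂(I)/SL₂(R) onto (R/Fitt₁(I))^×. -/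
namespace StmtNine

variable {R : Type*} [CommRing R]

/-- The colon-type ideal `{r | ∃ s, r*a + s*b = 0}`. -/
def colF (a b : R) : Ideal R where
  carrier := {r : R | ∃ s, r * a + s * b = 0}
  add_mem' := by
    rintro x y ⟨s, hs⟩ ⟨t, ht⟩
    exact ⟨s + t, by linear_combination hs + ht⟩
  zero_mem' := ⟨0, by ring⟩
  smul_mem' := by
    rintro c x ⟨s, hs⟩
    exact ⟨c * s, by simp only [smul_eq_mul]; linear_combination c * hs⟩

lemma mem_colF {a b r : R} : r ∈ colF a b ↔ ∃ s, r * a + s * b = 0 := Iff.rfl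

lemma relFitt_eq (a b : R) : relFittingIdeal a b = colF a b ⊔ colF b a := by
  apply le_antisymm
  · rw [relFittingIdeal, Ideal.span_le]
    rintro r (⟨s, hs⟩ | ⟨s, hs⟩)
    · exact Ideal.mem_sup_left ⟨s, hs⟩
    · exact Ideal.mem_sup_right ⟨s, by linear_combination hs⟩
  · apply sup_le
    · rintro r ⟨s, hs⟩
      exact Ideal.subset_span (Or.inl ⟨s, hs⟩)
    · rintro r ⟨s, hs⟩
      exact Ideal.subset_span (Or.inr ⟨s, by linear_combination hs⟩)

lemma colF_le_left (a b : R) : colF a b ≤ relFittingIdeal a b := by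
  rw [relFitt_eq]; exact le_sup_left

lemma colF_le_right (a b : R) : colF b a ≤ relFittingIdeal a b := by
  rw [relFitt_eq]; exact le_sup_right

lemma mem_relFitt_left {a b P Q : R} (h : P * a + Q * b = 0) : P ∈ relFittingIdeal a b :=
  Ideal.subset_span (Or.inl ⟨Q, h⟩)

lemma mem_relFitt_right {a b P Q : R} (h : P * a + Q * b = 0) : Q ∈ relFittingIdeal a b :=
  Ideal.subset_span (Or.inr ⟨P, h⟩)

lemma cancel {b : R} (hb : b ∈ nonZeroDivisors R) {z : R} (hz : z * b = 0) : z = 0 :=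
  hb.2 z hz

/-- two pairs are related by an SL₂ change of generators (columns convention). -/
def Rel (x y x' y' : R) : Prop :=
  ∃ σ : Matrix.SpecialLinearGroup (Fin 2) R,
    x' = σ.1 0 0 * x + σ.1 1 0 * y ∧ y' = σ.1 0 1 * x + σ.1 1 1 * y

lemma rel_of_matrix (X Y Z T x y : R) (hdet : X * T - Z * Y = 1) :
    Rel x y (X * x + Y * y) (Z * x + T * y) := by
  refine ⟨⟨!![X, Z; Y, T], by rw [Matrix.det_fin_two_of]; linear_combination hdet⟩, ?_, ?_⟩ <;>
    simp

lemma rel_congr {x y x' y' x'' y'' : R} (h : Rel x y x' y') (h1 : x' = x'') (h2 : y' = y'') :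
    Rel x y x'' y'' := h1 ▸ h2 ▸ h

lemma rel_symm {x y x' y' : R} (h : Rel x y x' y') : Rel x' y' x y := by
  obtain ⟨σ, h1, h2⟩ := h
  have hdet : σ.1 0 0 * σ.1 1 1 - σ.1 0 1 * σ.1 1 0 = 1 := by
    have := σ.2
    rwa [Matrix.det_fin_two] at this
  have h0 := rel_of_matrix (σ.1 1 1) (-(σ.1 1 0)) (-(σ.1 0 1)) (σ.1 0 0) x' y'
    (by linear_combination hdet)
  refine rel_congr h0 ?_ ?_
  · rw [h1, h2]; linear_combination x * hdet
  · rw [h1, h2]; linear_combination y * hdet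

lemma rel_trans {x y x' y' x'' y'' : R} (h : Rel x y x' y') (h' : Rel x' y' x'' y'') :
    Rel x y x'' y'' := by
  obtain ⟨σ, h1, h2⟩ := h
  obtain ⟨τ, h3, h4⟩ := h'
  refine ⟨σ * τ, ?_, ?_⟩ <;>
    simp only [Matrix.SpecialLinearGroup.coe_mul, Matrix.mul_apply, Fin.sum_univ_two]
  · linear_combination h3 + τ.1 0 0 * h1 + τ.1 1 0 * h2
  · linear_combination h4 + τ.1 0 1 * h1 + τ.1 1 1 * h2

lemma rel_span {x y x' y' : R} (h : Rel x y x' y') :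
    Ideal.span {x', y'} = Ideal.span {x, y} := by
  have key : ∀ u v u' v' : R, Rel u v u' v' →
      Ideal.span ({u', v'} : Set R) ≤ Ideal.span {u, v} := by
    rintro u v u' v' ⟨σ, h1, h2⟩
    rw [Ideal.span_le]
    rintro z hz
    simp only [Set.mem_insert_iff, Set.mem_singleton_iff] at hz
    rcases hz with rfl | rfl
    · exact Ideal.mem_span_pair.mpr ⟨σ.1 0 0, σ.1 1 0, h1.symm⟩
    · exact Ideal.mem_span_pair.mpr ⟨σ.1 0 1, σ.1 1 1, h2.symm⟩
  exact le_antisymm (key _ _ _ _ h) (key _ _ _ _ (rel_symm h))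

lemma gen_coeff {a b x y p q m k : R}
    (hx : x = p * a + q * b) (hy : y = m * a + k * b)
    (hGen : Ideal.span {x, y} = Ideal.span {a, b}) :
    ∃ c₁ c₂ f, f ∈ colF a b ∧ c₁ * p + c₂ * m + f = 1 := by
  have hamem : a ∈ Ideal.span ({x, y} : Set R) := by
    rw [hGen]; exact Ideal.mem_span_pair.mpr ⟨1, 0, by ring⟩
  obtain ⟨c₁, c₂, hc⟩ := Ideal.mem_span_pair.mp hamem
  refine ⟨c₁, c₂, 1 - c₁ * p - c₂ * m, ⟨-(c₁ * q + c₂ * k), ?_⟩, by ring⟩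
  rw [hx, hy] at hc
  linear_combination -hc

lemma det_congr {F : Ideal R} {p q m k p' q' m' k' : R}
    (h1 : p - p' ∈ F) (h2 : q - q' ∈ F) (h3 : m - m' ∈ F) (h4 : k - k' ∈ F) :
    (p * k - m * q) - (p' * k' - m' * q') ∈ F := by
  have e : (p * k - m * q) - (p' * k' - m' * q') =
      (k * (p - p') + p' * (k - k')) - (q * (m - m') + m' * (q - q')) := by ring
  rw [e]
  exact sub_mem (add_mem (F.mul_mem_left _ h1) (F.mul_mem_left _ h4))
    (add_mem (F.mul_mem_left _ h3) (F.mul_mem_left _ h2))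

lemma rel_det {a b x y x' y' p q m k p' q' m' k' : R}
    (hrel : Rel x y x' y')
    (hx : x = p * a + q * b) (hy : y = m * a + k * b)
    (hx' : x' = p' * a + q' * b) (hy' : y' = m' * a + k' * b) :
    (p * k - m * q) - (p' * k' - m' * q') ∈ relFittingIdeal a b := by
  obtain ⟨σ, h1, h2⟩ := hrel
  have hdet : σ.1 0 0 * σ.1 1 1 - σ.1 0 1 * σ.1 1 0 = 1 := by
    have := σ.2; rwa [Matrix.det_fin_two] at this
  set X := σ.1 0 0
  set Y := σ.1 1 0
  set Z := σ.1 0 1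
  set T := σ.1 1 1
  -- column congruences
  have c1 : (p' - (X * p + Y * m)) * a + (q' - (X * q + Y * k)) * b = 0 := by
    rw [hx, hy] at h1; rw [hx'] at h1; linear_combination h1
  have c2 : (m' - (Z * p + T * m)) * a + (k' - (Z * q + T * k)) * b = 0 := by
    rw [hx, hy] at h2; rw [hy'] at h2; linear_combination h2
  have hPK : (X * p + Y * m) * (Z * q + T * k) - (Z * p + T * m) * (X * q + Y * k)
      = p * k - m * q := by linear_combination (p * k - m * q) * hdet
  have step : ((X * p + Y * m) * (Z * q + T * k) - (Z * p + T * m) * (X * q + Y * k))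
      - (p' * k' - m' * q') ∈ relFittingIdeal a b := by
    refine det_congr ?_ ?_ ?_ ?_
    · exact mem_relFitt_left (a := a) (b := b)
        (show ((X * p + Y * m) - p') * a + ((X * q + Y * k) - q') * b = 0 by
          linear_combination -c1)
    · exact mem_relFitt_right (a := a) (b := b)
        (show ((X * p + Y * m) - p') * a + ((X * q + Y * k) - q') * b = 0 by
          linear_combination -c1)
    · exact mem_relFitt_left (a := a) (b := b)
        (show ((Z * p + T * m) - m') * a + ((Z * q + T * k) - k') * b = 0 by
          linear_combination -c2)
    · exact mem_relFitt_right (a := a) (b := b)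
        (show ((Z * p + T * m) - m') * a + ((Z * q + T * k) - k') * b = 0 by
          linear_combination -c2)
  rw [← hPK]
  exact step

lemma lemL
    (hasr : ∀ r ∈ nonZeroDivisors R, ∀ x y : R ⧸ Ideal.span {r},
      Ideal.span {x, y} = ⊤ → ∃ t : R ⧸ Ideal.span {r}, IsUnit (x + t * y))
    {K : Ideal R} {r : R} (hr : r ∈ nonZeroDivisors R) (hrK : r ∈ K)
    (x y α β k : R) (hk : k ∈ K) (hcombo : α * x + β * y + k = 1) :
    ∃ t c, (x + t * y) * c - 1 ∈ K := by
  set mk := Ideal.Quotient.mk (Ideal.span {r}) with hmk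
  have hspan : Ideal.span {mk x, mk (1 - α * x)} = ⊤ := by
    rw [Ideal.eq_top_iff_one, Ideal.mem_span_pair]
    refine ⟨mk α, 1, ?_⟩
    have e : α * x + (1 - α * x) = 1 := by ring
    rw [one_mul, ← map_mul, ← map_add, e, map_one]
  obtain ⟨t, ht⟩ := hasr r hr (mk x) (mk (1 - α * x)) hspan
  obtain ⟨t', rfl⟩ := Ideal.Quotient.mk_surjective t
  obtain ⟨v, hv⟩ := ht.exists_right_inv
  obtain ⟨u, rfl⟩ := Ideal.Quotient.mk_surjective v
  have hmem : (x + t' * (1 - α * x)) * u - 1 ∈ Ideal.span {r} := by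
    rw [← Ideal.Quotient.eq_zero_iff_mem]
    have : mk ((x + t' * (1 - α * x)) * u - 1)
        = (mk x + mk t' * mk (1 - α * x)) * mk u - 1 := by
      rw [map_sub, map_mul, map_add, map_mul, map_one]
    rw [this, hv, sub_self]
  have hmemK : (x + t' * (1 - α * x)) * u - 1 ∈ K :=
    (Ideal.span_singleton_le_iff_mem K).mpr hrK hmem
  refine ⟨t' * β, u, ?_⟩
  have heq : (x + t' * β * y) * u - 1
      = ((x + t' * (1 - α * x)) * u - 1) + (-(t' * u)) * k := by
    linear_combination (t' * u) * hcombo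
  rw [heq]
  exact add_mem hmemK (K.mul_mem_left _ hk)

lemma step1a
    (hasr : ∀ r ∈ nonZeroDivisors R, ∀ x y : R ⧸ Ideal.span {r},
      Ideal.span {x, y} = ⊤ → ∃ t : R ⧸ Ideal.span {r}, IsUnit (x + t * y))
    {a b : R} (hb : b ∈ nonZeroDivisors R)
    {x y p q m k : R}
    (hx : x = p * a + q * b) (hy : y = m * a + k * b)
    (hGen : Ideal.span {x, y} = Ideal.span {a, b}) :
    ∃ x₁ p₁ q₁ k₂, Rel x y x₁ (k₂ * b) ∧ x₁ = p₁ * a + q₁ * b := by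
  obtain ⟨c₁, c₂, f, hf, hcombo⟩ := gen_coeff hx hy hGen
  have hbF : b ∈ colF a b := ⟨-a, by ring⟩
  obtain ⟨t, c, htc⟩ := lemL hasr hb hbF p m c₁ c₂ f hf hcombo
  obtain ⟨s₁, hs₁⟩ := htc
  have h1 := rel_of_matrix 1 t 0 1 x y (by ring)
  have hrel1 : Rel x y (x + t * y) y := rel_congr h1 (by ring) (by ring)
  have h2 := rel_of_matrix 1 0 (-(c * m)) 1 (x + t * y) y (by ring)
  have hy2 : -(c * m) * (x + t * y) + 1 * y
      = (m * s₁ + k + -(c * m) * (q + t * k)) * b := by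
    rw [hx, hy]; linear_combination (-m) * hs₁
  have hrel2 : Rel (x + t * y) y (x + t * y) ((m * s₁ + k + -(c * m) * (q + t * k)) * b) :=
    rel_congr h2 (by ring) hy2
  exact ⟨x + t * y, p + t * m, q + t * k, _, rel_trans hrel1 hrel2, by rw [hx, hy]; ring⟩

lemma step1b
    (hasr : ∀ r ∈ nonZeroDivisors R, ∀ x y : R ⧸ Ideal.span {r},
      Ideal.span {x, y} = ⊤ → ∃ t : R ⧸ Ideal.span {r}, IsUnit (x + t * y))
    {a b : R} (ha : a ∈ nonZeroDivisors R) (hb : b ∈ nonZeroDivisors R)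
    {x p q k : R} (hx : x = p * a + q * b)
    (hGen : Ideal.span {x, k * b} = Ideal.span {a, b}) :
    ∃ x' p' q', Rel x (k * b) x' b ∧ x' = p' * a + q' * b := by
  have hbmem : b ∈ Ideal.span ({x, k * b} : Set R) := by
    rw [hGen]; exact Ideal.mem_span_pair.mpr ⟨0, 1, by ring⟩
  obtain ⟨g₀, h₀, hg⟩ := Ideal.mem_span_pair.mp hbmem
  have hab : a * b ∈ nonZeroDivisors R := mul_mem ha hb
  obtain ⟨t, u, htu⟩ := lemL hasr hab (Ideal.mem_span_singleton_self (a * b))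
    h₀ (1 - h₀ * k) k 1 0 (zero_mem _) (by ring)
  obtain ⟨μ, hμ⟩ := Ideal.mem_span_singleton'.mp htu
  have hZT : ((1 - t * k) * g₀) * x + (h₀ + t * (1 - h₀ * k)) * (k * b) = b := by
    linear_combination (1 - t * k) * hg
  have hdet : (u - μ * (a * (k * b))) * (h₀ + t * (1 - h₀ * k))
      - ((1 - t * k) * g₀) * (μ * (a * x)) = 1 := by
    linear_combination -hμ - (μ * a) * hZT
  have h3 := rel_of_matrix (u - μ * (a * (k * b))) (μ * (a * x)) ((1 - t * k) * g₀)
    (h₀ + t * (1 - h₀ * k)) x (k * b) hdet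
  refine ⟨(u - μ * (a * (k * b))) * x + (μ * (a * x)) * (k * b),
    (u - μ * (a * (k * b))) * p, (u - μ * (a * (k * b))) * q + (μ * (a * x)) * k,
    rel_congr h3 rfl hZT, ?_⟩
  rw [hx]; ring

lemma step1
    (hasr : ∀ r ∈ nonZeroDivisors R, ∀ x y : R ⧸ Ideal.span {r},
      Ideal.span {x, y} = ⊤ → ∃ t : R ⧸ Ideal.span {r}, IsUnit (x + t * y))
    {a b : R} (ha : a ∈ nonZeroDivisors R) (hb : b ∈ nonZeroDivisors R)
    {x y p q m k : R}
    (hx : x = p * a + q * b) (hy : y = m * a + k * b)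
    (hGen : Ideal.span {x, y} = Ideal.span {a, b}) :
    ∃ x' p' q', Rel x y x' b ∧ x' = p' * a + q' * b := by
  obtain ⟨x₁, p₁, q₁, k₂, hrel₁, hx₁⟩ := step1a hasr hb hx hy hGen
  have hGen₁ : Ideal.span {x₁, k₂ * b} = Ideal.span {a, b} := (rel_span hrel₁).trans hGen
  obtain ⟨x₃, p₃, q₃, hrel₃, hx₃⟩ := step1b hasr ha hb hx₁ hGen₁
  exact ⟨x₃, p₃, q₃, rel_trans hrel₁ hrel₃, hx₃⟩

lemma step2 {a b : R} (hb : b ∈ nonZeroDivisors R)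
    {x x' p q p' q' : R}
    (hx : x = p * a + q * b) (hx' : x' = p' * a + q' * b)
    (hGen : Ideal.span {x, b} = Ideal.span {a, b})
    (hGen' : Ideal.span {x', b} = Ideal.span {a, b})
    (hpp' : p' - p ∈ relFittingIdeal a b) :
    Rel x b x' b := by
  obtain ⟨c, c₂, f, hf, hcombo⟩ := gen_coeff hx (show (b : R) = 0 * a + 1 * b by ring) hGen
  obtain ⟨c', c₂', f', hf', hcombo'⟩ :=
    gen_coeff hx' (show (b : R) = 0 * a + 1 * b by ring) hGen'
  have hu : c * p - 1 ∈ colF a b := by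
    have e : c * p - 1 = -f := by linear_combination hcombo
    rw [e]; exact neg_mem hf
  have hu'' : c' * p' - 1 ∈ colF a b := by
    have e : c' * p' - 1 = -f' := by linear_combination hcombo'
    rw [e]; exact neg_mem hf'
  rw [relFitt_eq] at hpp'
  obtain ⟨f₁, hf₁, f₂, hf₂, hsum⟩ := Submodule.mem_sup.mp hpp'
  obtain ⟨s₁, hs₁⟩ := id hf₁
  obtain ⟨s₂, hs₂⟩ := id hf₂
  have hu' : c' * (p + f₂) - 1 ∈ colF a b := by
    have e : c' * (p + f₂) - 1 = (c' * p' - 1) - c' * f₁ := by linear_combination c' * hsum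
    rw [e]; exact sub_mem hu'' ((colF a b).mul_mem_left _ hf₁)
  have hZmem : -(c * c' * s₂) ∈ colF a b :=
    ⟨-(c * c' * f₂), by linear_combination (-(c * c')) * hs₂⟩
  have hF1big : f₂ - (p * (c * c' * f₂) + -(c * c' * s₂) * q + c * c' * f₂ * f₂) * p
      ∈ colF a b := by
    have key : f₂ - (p * (c * c' * f₂) + -(c * c' * s₂) * q + c * c' * f₂ * f₂) * p =
        -(f₂ * (c * p - 1)) - f₂ * (c' * (p + f₂) - 1)
          - f₂ * ((c * p - 1) * (c' * (p + f₂) - 1)) - (q * p) * -(c * c' * s₂) := by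
      ring
    rw [key]
    refine sub_mem (sub_mem (sub_mem (neg_mem ((colF a b).mul_mem_left _ hu))
      ((colF a b).mul_mem_left _ hu')) ((colF a b).mul_mem_left _
        ((colF a b).mul_mem_left _ hu'))) ((colF a b).mul_mem_left _ hZmem)
  obtain ⟨s₃, hs₃⟩ := hF1big
  have I1 : -(c * c' * s₂) * x
      + (1 - (p * (c * c' * f₂) + -(c * c' * s₂) * q)) * b = b := by
    rw [hx]; linear_combination (-(p * c * c')) * hs₂
  have I2 : (1 + (p * (c * c' * f₂) + -(c * c' * s₂) * q + c * c' * f₂ * f₂)) * x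
      + -(s₃ + (p * (c * c' * f₂) + -(c * c' * s₂) * q + c * c' * f₂ * f₂) * q) * b
      = x + f₂ * a := by
    rw [hx]; linear_combination -hs₃
  have hdetb : ((1 + (p * (c * c' * f₂) + -(c * c' * s₂) * q + c * c' * f₂ * f₂))
        * (1 - (p * (c * c' * f₂) + -(c * c' * s₂) * q))
      - -(c * c' * s₂) * -(s₃ + (p * (c * c' * f₂) + -(c * c' * s₂) * q
        + c * c' * f₂ * f₂) * q) - 1) * b = 0 := by
    linear_combination
      (c * c' * f₂ - p * (c * c') * (p * (c * c' * f₂) + -(c * c' * s₂) * q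
        + c * c' * f₂ * f₂)) * hs₂ + (-(c * c' * s₂)) * hs₃
  have hdet2 : (1 + (p * (c * c' * f₂) + -(c * c' * s₂) * q + c * c' * f₂ * f₂))
        * (1 - (p * (c * c' * f₂) + -(c * c' * s₂) * q))
      - -(c * c' * s₂) * -(s₃ + (p * (c * c' * f₂) + -(c * c' * s₂) * q
        + c * c' * f₂ * f₂) * q) = 1 := by
    have h0 := cancel hb hdetb
    linear_combination h0
  have h3 := rel_of_matrix
    (1 + (p * (c * c' * f₂) + -(c * c' * s₂) * q + c * c' * f₂ * f₂))
    (-(s₃ + (p * (c * c' * f₂) + -(c * c' * s₂) * q + c * c' * f₂ * f₂) * q))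
    (-(c * c' * s₂))
    (1 - (p * (c * c' * f₂) + -(c * c' * s₂) * q))
    x b hdet2
  have hrelmid : Rel x b (x + f₂ * a) b := rel_congr h3 I2 I1
  have h4 := rel_of_matrix 1 (q' - q - s₁) 0 1 (x + f₂ * a) b (by ring)
  have hxfinal : 1 * (x + f₂ * a) + (q' - q - s₁) * b = x' := by
    rw [hx, hx']; linear_combination -hs₁ + a * hsum
  have hrelend : Rel (x + f₂ * a) b x' b := rel_congr h4 hxfinal (by ring)
  exact rel_trans hrelmid hrelend

end StmtNine

open StmtNine in
/-- Let `R` be almost of stable rank 1 (`R/Rr` has stable rank 1 for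
every regular `r`) and `I` an ideal generated by two regular elements `a`, `b`. Then the
determinant map induces a bijection `V₂(I)/SL₂(R) ≃ (R/Fitt₁(I))ˣ`: every generating
pair of `I` is obtained from `(a, b)` by a matrix; two generating pairs are
`SL₂(R)`-equivalent iff their determinants agree mod `Fitt₁(I)` (injectivity); and every
unit of `R/Fitt₁(I)` is attained (surjectivity). -/
theorem det_bijection_of_almost_stable_rank_one {R : Type*} [CommRing R]
    (hasr : ∀ r ∈ nonZeroDivisors R, ∀ x y : R ⧸ Ideal.span {r},
      Ideal.span {x, y} = ⊤ → ∃ t : R ⧸ Ideal.span {r}, IsUnit (x + t * y))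
    (a b : R) (ha : a ∈ nonZeroDivisors R) (hb : b ∈ nonZeroDivisors R)
    (I : Ideal R) (hI : I = Ideal.span {a, b}) :
    (∀ w : Fin 2 → R, Ideal.span {w 0, w 1} = I →
      ∃ A : Matrix (Fin 2) (Fin 2) R, ∀ j, w j = ∑ i, A i j * ![a, b] i) ∧
    (∀ (w w' : Fin 2 → R) (A A' : Matrix (Fin 2) (Fin 2) R),
      Ideal.span {w 0, w 1} = I → Ideal.span {w' 0, w' 1} = I →
      (∀ j, w j = ∑ i, A i j * ![a, b] i) → (∀ j, w' j = ∑ i, A' i j * ![a, b] i) →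
      ((A.det - A'.det ∈ relFittingIdeal a b) ↔
        ∃ σ : Matrix.SpecialLinearGroup (Fin 2) R,
          ∀ j, w' j = ∑ i, (σ : Matrix (Fin 2) (Fin 2) R) i j * w i)) ∧
    (∀ u : (R ⧸ relFittingIdeal a b)ˣ,
      ∃ (w : Fin 2 → R) (A : Matrix (Fin 2) (Fin 2) R),
        Ideal.span {w 0, w 1} = I ∧
        (∀ j, w j = ∑ i, A i j * ![a, b] i) ∧
        Ideal.Quotient.mk (relFittingIdeal a b) A.det = (u : R ⧸ relFittingIdeal a b)) := by
  refine ⟨?_, ?_, ?_⟩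
  · -- Part 1 : every generating pair is expressed by a matrix
    intro w hw
    have h0 : w 0 ∈ Ideal.span ({a, b} : Set R) := by
      rw [← hI, ← hw]; exact Ideal.subset_span (by simp)
    have h1 : w 1 ∈ Ideal.span ({a, b} : Set R) := by
      rw [← hI, ← hw]; exact Ideal.subset_span (by simp)
    obtain ⟨p, q, hpq⟩ := Ideal.mem_span_pair.mp h0
    obtain ⟨m, k, hmk⟩ := Ideal.mem_span_pair.mp h1
    refine ⟨!![p, m; q, k], ?_⟩
    intro j
    fin_cases j
    · simp [Fin.sum_univ_two]; linear_combination -hpq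
    · simp [Fin.sum_univ_two]; linear_combination -hmk
  · -- Part 2 : the determinant criterion
    intro w w' A A' hw hw' hA hA'
    have hx : w 0 = A 0 0 * a + A 1 0 * b := by
      have := hA 0; simpa [Fin.sum_univ_two] using this
    have hy : w 1 = A 0 1 * a + A 1 1 * b := by
      have := hA 1; simpa [Fin.sum_univ_two] using this
    have hx' : w' 0 = A' 0 0 * a + A' 1 0 * b := by
      have := hA' 0; simpa [Fin.sum_univ_two] using this
    have hy' : w' 1 = A' 0 1 * a + A' 1 1 * b := by
      have := hA' 1; simpa [Fin.sum_univ_two] using this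
    constructor
    · intro hdet
      rw [Matrix.det_fin_two, Matrix.det_fin_two] at hdet
      have hGen : Ideal.span {w 0, w 1} = Ideal.span {a, b} := hw.trans hI
      have hGen' : Ideal.span {w' 0, w' 1} = Ideal.span {a, b} := hw'.trans hI
      obtain ⟨x₃, p₃, q₃, hrel, hx₃⟩ := step1 hasr ha hb hx hy hGen
      obtain ⟨x₃', p₃', q₃', hrel', hx₃'⟩ := step1 hasr ha hb hx' hy' hGen'
      have hd1 : (A 0 0 * A 1 1 - A 0 1 * A 1 0) - p₃ ∈ relFittingIdeal a b := by
        have h := rel_det hrel hx hy hx₃ (show (b : R) = 0 * a + 1 * b by ring)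
        have e : (A 0 0 * A 1 1 - A 0 1 * A 1 0) - p₃
            = (A 0 0 * A 1 1 - A 0 1 * A 1 0) - (p₃ * 1 - 0 * q₃) := by ring
        rw [e]; exact h
      have hd1' : (A' 0 0 * A' 1 1 - A' 0 1 * A' 1 0) - p₃' ∈ relFittingIdeal a b := by
        have h := rel_det hrel' hx' hy' hx₃' (show (b : R) = 0 * a + 1 * b by ring)
        have e : (A' 0 0 * A' 1 1 - A' 0 1 * A' 1 0) - p₃'
            = (A' 0 0 * A' 1 1 - A' 0 1 * A' 1 0) - (p₃' * 1 - 0 * q₃') := by ring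
        rw [e]; exact h
      have hpp : p₃' - p₃ ∈ relFittingIdeal a b := by
        have e : p₃' - p₃ = ((A 0 0 * A 1 1 - A 0 1 * A 1 0) - p₃)
            - ((A' 0 0 * A' 1 1 - A' 0 1 * A' 1 0) - p₃')
            - ((A 0 0 * A 1 1 - A 0 1 * A 1 0)
              - (A' 0 0 * A' 1 1 - A' 0 1 * A' 1 0)) := by ring
        rw [e]; exact sub_mem (sub_mem hd1 hd1') hdet
      have hGen₃ : Ideal.span {x₃, b} = Ideal.span {a, b} := (rel_span hrel).trans hGen
      have hGen₃' : Ideal.span {x₃', b} = Ideal.span {a, b} := (rel_span hrel').trans hGen'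
      have hstep2 := step2 hb hx₃ hx₃' hGen₃ hGen₃' hpp
      have hfinal : Rel (w 0) (w 1) (w' 0) (w' 1) :=
        rel_trans (rel_trans hrel hstep2) (rel_symm hrel')
      obtain ⟨σ, h1, h2⟩ := hfinal
      refine ⟨σ, ?_⟩
      intro j
      fin_cases j <;> simp [Fin.sum_univ_two]
      · linear_combination h1
      · linear_combination h2
    · rintro ⟨σ, hσ⟩
      have h1 : w' 0 = σ.1 0 0 * w 0 + σ.1 1 0 * w 1 := by
        have := hσ 0; simpa [Fin.sum_univ_two] using this
      have h2 : w' 1 = σ.1 0 1 * w 0 + σ.1 1 1 * w 1 := by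
        have := hσ 1; simpa [Fin.sum_univ_two] using this
      have hrel : Rel (w 0) (w 1) (w' 0) (w' 1) := ⟨σ, h1, h2⟩
      have h := rel_det hrel hx hy hx' hy'
      rw [Matrix.det_fin_two, Matrix.det_fin_two]
      exact h
  · -- Part 3 : surjectivity of the determinant
    intro u
    obtain ⟨c, hc⟩ := Ideal.Quotient.mk_surjective (u : R ⧸ relFittingIdeal a b)
    obtain ⟨d, hd⟩ := Ideal.Quotient.mk_surjective ((u⁻¹ : (R ⧸ relFittingIdeal a b)ˣ)
      : R ⧸ relFittingIdeal a b)
    have hcd : c * d - 1 ∈ relFittingIdeal a b := by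
      rw [← Ideal.Quotient.eq_zero_iff_mem, map_sub, map_mul, map_one, hc, hd]
      rw [← Units.val_mul, mul_inv_cancel]
      simp
    have hcd' : c * d - 1 ∈ colF a b ⊔ colF b a := by rwa [relFitt_eq] at hcd
    obtain ⟨f₁, hf₁, f₂, hf₂, hsum⟩ := Submodule.mem_sup.mp hcd'
    have haF : a ∈ colF b a := ⟨-b, by ring⟩
    obtain ⟨t, e, hte⟩ := lemL hasr ha haF c f₁ d (-1) (-f₂) (neg_mem hf₂)
      (by linear_combination -hsum)
    obtain ⟨s, hs⟩ := hte
    -- hs : ((c + t*f₁)*e - 1)*b + s*a = 0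
    refine ⟨![a, (c + t * f₁) * b], !![1, 0; 0, c + t * f₁], ?_, ?_, ?_⟩
    · rw [hI]
      apply le_antisymm
      · rw [Ideal.span_le]
        rintro z hz
        simp only [Set.mem_insert_iff, Set.mem_singleton_iff, Matrix.cons_val_zero,
          Matrix.cons_val_one, Matrix.head_cons] at hz
        rcases hz with rfl | rfl
        · exact Ideal.mem_span_pair.mpr ⟨1, 0, by ring⟩
        · exact Ideal.mem_span_pair.mpr ⟨0, c + t * f₁, by ring⟩
      · rw [Ideal.span_le]
        rintro z hz
        simp only [Set.mem_insert_iff, Set.mem_singleton_iff] at hz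
        rcases hz with rfl | rfl
        · exact Ideal.mem_span_pair.mpr ⟨1, 0, by simp⟩
        · refine Ideal.mem_span_pair.mpr ⟨s, e, ?_⟩
          simp only [Matrix.cons_val_zero, Matrix.cons_val_one, Matrix.head_cons]
          linear_combination hs
    · intro j
      fin_cases j <;> simp [Fin.sum_univ_two]
    · rw [Matrix.det_fin_two_of]
      have hmemF : t * f₁ ∈ relFittingIdeal a b :=
        (colF_le_left a b) ((colF a b).mul_mem_left t hf₁)
      have : Ideal.Quotient.mk (relFittingIdeal a b) (t * f₁) = 0 :=
        Ideal.Quotient.eq_zero_iff_mem.mpr hmemF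
      rw [show (1 : R) * (c + t * f₁) - 0 * 0 = c + t * f₁ by ring, map_add, this, add_zero, hc]
end

section
/- Let R be a reduced commutative ring with finitely many minimal prime ideals, and let I be a faithful ideal of R generated by a vector m = (m₁,…,m_n). Then there exists a generating vector m' of I all of whose components are regular elements of R, with m' obtained from m by elementary transformations (i.e., m ∼_{Eₙ(R)} m'). -/
section Aux

variable {R : Type*} [CommRing R]

/-- Elementary equivalence of generating vectors, bundled with span preservation. -/
private def ElemEquiv {n : ℕ} (m m' : Fin n → R) : Prop :=
  Ideal.span (Set.range m') = Ideal.span (Set.range m) ∧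
  ∃ L : List (Matrix (Fin n) (Fin n) R),
    (∀ E ∈ L, ∃ (i j : Fin n) (c : R), i ≠ j ∧ E = Matrix.transvection i j c) ∧
    (∀ j, m' j = ∑ i, L.prod i j * m i)

private lemma elem_refl {n : ℕ} (m : Fin n → R) : ElemEquiv m m := by
  refine ⟨rfl, [], by simp, fun j => ?_⟩
  simp [Matrix.one_apply]

private lemma elem_trans {n : ℕ} {m m' m'' : Fin n → R}
    (h1 : ElemEquiv m m') (h2 : ElemEquiv m' m'') : ElemEquiv m m'' := by
  obtain ⟨hs1, L1, hL1, hP1⟩ := h1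
  obtain ⟨hs2, L2, hL2, hP2⟩ := h2
  refine ⟨hs2.trans hs1, L1 ++ L2, ?_, fun j => ?_⟩
  · intro E hE
    rcases List.mem_append.1 hE with h | h
    exacts [hL1 E h, hL2 E h]
  · rw [List.prod_append]
    calc m'' j = ∑ k, L2.prod k j * m' k := hP2 j
      _ = ∑ k, L2.prod k j * ∑ i, L1.prod i k * m i := by simp_rw [hP1]
      _ = ∑ i, (L1.prod * L2.prod) i j * m i := by
          simp_rw [Matrix.mul_apply, Finset.mul_sum, Finset.sum_mul]
          rw [Finset.sum_comm]
          refine Finset.sum_congr rfl fun i _ => Finset.sum_congr rfl fun k _ => by ring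

private lemma elem_step {n : ℕ} (m : Fin n → R) {i j : Fin n} (hij : i ≠ j) (c : R) :
    ElemEquiv m (Function.update m j (m j + c * m i)) := by
  classical
  constructor
  · apply le_antisymm
    · rw [Ideal.span_le]
      rintro _ ⟨k, rfl⟩
      by_cases hk : k = j
      · rw [hk, Function.update_self]
        exact Ideal.add_mem _ (Ideal.subset_span ⟨j, rfl⟩)
          (Ideal.mul_mem_left _ _ (Ideal.subset_span ⟨i, rfl⟩))
      · rw [Function.update_of_ne hk]
        exact Ideal.subset_span ⟨k, rfl⟩
    · rw [Ideal.span_le]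
      rintro _ ⟨k, rfl⟩
      by_cases hk : k = j
      · have : m k = Function.update m j (m j + c * m i) j
            - c * Function.update m j (m j + c * m i) i := by
          rw [hk, Function.update_self, Function.update_of_ne hij]; ring
        rw [this]
        exact Ideal.sub_mem _ (Ideal.subset_span ⟨j, rfl⟩)
          (Ideal.mul_mem_left _ _ (Ideal.subset_span ⟨i, rfl⟩))
      · exact Ideal.subset_span ⟨k, Function.update_of_ne hk _ _⟩
  · refine ⟨[Matrix.transvection i j c], ?_, fun k => ?_⟩
    · intro E hE
      rw [List.mem_singleton] at hE
      exact ⟨i, j, c, hij, hE⟩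
    · rw [List.prod_singleton]
      have : ∀ l, Matrix.transvection i j c l k * m l
          = (if l = k then m l else 0) + (if i = l ∧ j = k then c * m l else 0) := by
        intro l
        simp only [Matrix.transvection, Matrix.add_apply, Matrix.one_apply,
          Matrix.single, Matrix.of_apply, add_mul]
        congr 1 <;> split <;> simp
      simp_rw [this, Finset.sum_add_distrib, Finset.sum_ite_eq', Finset.mem_univ, if_true]
      by_cases hk : k = j
      · subst hk
        rw [Function.update_self]
        simp
      · rw [Function.update_of_ne hk]
        have : ∀ l, (if i = l ∧ j = k then c * m l else 0) = 0 := by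
          intro l
          rw [if_neg]
          rintro ⟨rfl, rfl⟩
          exact hk rfl
        simp [this]

/-- Prime avoidance in the form needed: find `a ∈ J` with `x + a` outside all
primes of a pairwise-incomparable finite family, provided whenever `x ∈ p`, `J ≰ p`. -/
private lemma avoid {S : Finset (Ideal R)} (hprime : ∀ p ∈ S, p.IsPrime)
    (hincomp : ∀ p ∈ S, ∀ q ∈ S, p ≤ q → p = q)
    (x : R) (J : Ideal R) (hJ : ∀ p ∈ S, x ∈ p → ¬J ≤ p) :
    ∃ a ∈ J, ∀ p ∈ S, x + a ∉ p := by
  classical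
  set A := S.filter (fun p => x ∈ p) with hA
  set B := S.filter (fun p => x ∉ p) with hB
  rcases A.eq_empty_or_nonempty with hAe | ⟨p₀, hp₀⟩
  · refine ⟨0, J.zero_mem, fun p hp hxp => ?_⟩
    have : p ∈ A := Finset.mem_filter.2 ⟨hp, by rwa [add_zero] at hxp⟩
    rw [hAe] at this
    exact absurd this (Finset.notMem_empty p)
  · set K : Ideal R := J ⊓ B.inf id with hK
    have hKA : ¬(K : Set R) ⊆ ⋃ p ∈ (A : Set (Ideal R)), (p : Set R) := by
      rw [Ideal.subset_union_prime p₀ p₀ (fun p hp _ _ => hprime p (Finset.mem_filter.1 hp).1)]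
      rintro ⟨p, hp, hKp⟩
      obtain ⟨hpS, hxp⟩ := Finset.mem_filter.1 hp
      rcases ((hprime p hpS).inf_le).1 hKp with h | h
      · exact hJ p hpS hxp h
      · obtain ⟨q, hq, hqp⟩ := ((hprime p hpS).inf_le').1 h
        obtain ⟨hqS, hxq⟩ := Finset.mem_filter.1 hq
        exact hxq ((hincomp q hqS p hpS hqp) ▸ hxp)
    obtain ⟨a, haK, haA⟩ := Set.not_subset.1 hKA
    refine ⟨a, (inf_le_left : K ≤ J) haK, fun p hp hxa => ?_⟩
    by_cases hxp : x ∈ p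
    · exact haA (Set.mem_biUnion (Finset.mem_filter.2 ⟨hp, hxp⟩ : p ∈ A)
        ((Ideal.add_mem_iff_right p hxp).1 hxa))
    · have haB : a ∈ p := by
        have : K ≤ p := le_trans inf_le_right
          (Finset.inf_le (Finset.mem_filter.2 ⟨hp, hxp⟩ : p ∈ B))
        exact this haK
      exact hxp ((Ideal.add_mem_iff_left p haB).1 hxa)

private lemma regular_of_avoid [IsReduced R] {x : R}
    (hx : ∀ p ∈ minimalPrimes R, x ∉ p) : x ∈ nonZeroDivisors R := by
  rw [mem_nonZeroDivisors_iff_right]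
  intro y hy
  have hmem : y ∈ sInf (minimalPrimes R) := by
    rw [Submodule.mem_sInf]
    intro p hp
    have hP : Ideal.IsPrime p := hp.1.1
    have : y * x ∈ p := by rw [hy]; exact p.zero_mem
    rcases hP.mem_or_mem this with h | h
    · exact h
    · exact absurd h (hx p hp)
  have : sInf (minimalPrimes R) = (⊥ : Ideal R) := by
    have h1 : sInf (minimalPrimes R) = (0 : Ideal R).radical := Ideal.sInf_minimalPrimes
    rw [h1]
    exact nilradical_eq_zero R
  rw [this] at hmem
  exact hmem

private lemma not_le_minimal [IsReduced R] (hfin : (minimalPrimes R).Finite)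
    {I : Ideal R} (hfaithful : ∀ r : R, (∀ x ∈ I, r * x = 0) → r = 0) :
    ∀ p ∈ minimalPrimes R, ¬I ≤ p := by
  classical
  intro p hp hIp
  have hP : p.IsPrime := hp.1.1
  set S := hfin.toFinset with hS
  have hpS : p ∈ S := hfin.mem_toFinset.2 hp
  have hKp : ¬(S.erase p).inf id ≤ p := by
    intro h
    obtain ⟨q, hq, hqp⟩ := (hP.inf_le').1 h
    have hqS := Finset.mem_of_mem_erase hq
    have hqmin : q ∈ minimalPrimes R := hfin.mem_toFinset.1 hqS
    have : p ≤ q := hp.2 ⟨hqmin.1.1, bot_le⟩ hqp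
    exact (Finset.ne_of_mem_erase hq) (le_antisymm hqp this)
  obtain ⟨s, hsK, hsp⟩ := SetLike.not_le_iff_exists.1 hKp
  have hs0 : s = 0 := by
    apply hfaithful
    intro x hx
    have hmem : s * x ∈ sInf (minimalPrimes R) := by
      rw [Submodule.mem_sInf]
      intro q hq
      by_cases hqp : q = p
      · subst hqp
        exact Ideal.mul_mem_left _ _ (hIp hx)
      · have hqS : q ∈ S.erase p := Finset.mem_erase.2 ⟨hqp, hfin.mem_toFinset.2 hq⟩
        exact Ideal.mul_mem_right _ _ ((Finset.inf_le hqS : (S.erase p).inf id ≤ q) hsK)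
    have : sInf (minimalPrimes R) = (⊥ : Ideal R) := by
      have h1 : sInf (minimalPrimes R) = (0 : Ideal R).radical := Ideal.sInf_minimalPrimes
      rw [h1]
      exact nilradical_eq_zero R
    rwa [this] at hmem
  exact hsp (hs0 ▸ p.zero_mem)

private lemma elem_phase1 {n : ℕ} (m : Fin n → R) (i₀ : Fin n) (c : Fin n → R)
    (s : Finset (Fin n)) (hi₀ : i₀ ∉ s) :
    ElemEquiv m (Function.update m i₀ (m i₀ + ∑ j ∈ s, c j * m j)) := by
  classical
  induction s using Finset.induction_on with
  | empty =>
      simpa using elem_refl m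
  | @insert j s' hj ih =>
      have hji₀ : j ≠ i₀ := fun h => hi₀ (h ▸ Finset.mem_insert_self j s')
      have hi₀s' : i₀ ∉ s' := fun h => hi₀ (Finset.mem_insert_of_mem h)
      set v := Function.update m i₀ (m i₀ + ∑ k ∈ s', c k * m k) with hv
      refine elem_trans (ih hi₀s') ?_
      have hstep := elem_step v hji₀ (c j)
      have heq : Function.update v i₀ (v i₀ + c j * v j)
          = Function.update m i₀ (m i₀ + ∑ k ∈ insert j s', c k * m k) := by
        have h1 : v i₀ = m i₀ + ∑ k ∈ s', c k * m k := Function.update_self _ _ _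
        have h2 : v j = m j := Function.update_of_ne hji₀ _ _
        rw [h1, h2, hv, Function.update_idem, Finset.sum_insert hj]
        have hval : m i₀ + ∑ x ∈ s', c x * m x + c j * m j
            = m i₀ + (c j * m j + ∑ x ∈ s', c x * m x) := by ring
        rw [hval]
      exact heq ▸ hstep

private lemma elem_phase2 {n : ℕ} (m : Fin n → R) (i₀ : Fin n) (c : Fin n → R)
    (s : Finset (Fin n)) (hi₀ : i₀ ∉ s) :
    ElemEquiv m (fun j => if j ∈ s then m j + c j * m i₀ else m j) := by
  classical
  induction s using Finset.induction_on with
  | empty =>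
      simpa using elem_refl m
  | @insert j s' hj ih =>
      have hji₀ : j ≠ i₀ := fun h => hi₀ (h ▸ Finset.mem_insert_self j s')
      have hi₀s' : i₀ ∉ s' := fun h => hi₀ (Finset.mem_insert_of_mem h)
      set v : Fin n → R := fun k => if k ∈ s' then m k + c k * m i₀ else m k with hv
      refine elem_trans (ih hi₀s') ?_
      have hstep := elem_step v hji₀.symm (c j)
      have heq : Function.update v j (v j + c j * v i₀)
          = fun k => if k ∈ insert j s' then m k + c k * m i₀ else m k := by
        funext k
        by_cases hk : k = j
        · subst hk
          rw [Function.update_self]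
          have h1 : v k = m k := by rw [hv]; simp [hj]
          have h2 : v i₀ = m i₀ := by rw [hv]; simp [hi₀s']
          rw [h1, h2, if_pos (Finset.mem_insert_self k s')]
        · rw [Function.update_of_ne hk, hv]
          simp only [Finset.mem_insert]
          by_cases hks' : k ∈ s' <;> simp [hks', hk]
      exact heq ▸ hstep

end Aux

/-- Over a reduced ring with finitely many minimal primes, any
generating vector of a faithful ideal is `Eₙ(R)`-equivalent (via a product of elementary
transvection matrices) to a generating vector all of whose components are regular. -/
theorem regular_generators_up_to_elementary {R : Type*} [CommRing R] [IsReduced R]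
    (hfin : (minimalPrimes R).Finite)
    (I : Ideal R) (hfaithful : ∀ r : R, (∀ x ∈ I, r * x = 0) → r = 0)
    {n : ℕ} (m : Fin n → R) (hm : Ideal.span (Set.range m) = I) :
    ∃ (m' : Fin n → R) (L : List (Matrix (Fin n) (Fin n) R)),
      Ideal.span (Set.range m') = I ∧
      (∀ i, m' i ∈ nonZeroDivisors R) ∧
      (∀ E ∈ L, ∃ (i j : Fin n) (c : R), i ≠ j ∧ E = Matrix.transvection i j c) ∧
      (∀ j, m' j = ∑ i, L.prod i j * m i) := by
  classical
  rcases Nat.eq_zero_or_pos n with hn | hn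
  · subst hn
    exact ⟨m, [], hm, fun i => i.elim0, by simp, fun j => j.elim0⟩
  set i₀ : Fin n := ⟨0, hn⟩ with hi₀def
  set S : Finset (Ideal R) := hfin.toFinset with hSdef
  have hprime : ∀ p ∈ S, p.IsPrime := fun p hp => (hfin.mem_toFinset.1 hp).1.1
  have hincomp : ∀ p ∈ S, ∀ q ∈ S, p ≤ q → p = q := by
    intro p hp q hq hpq
    have hpm := hfin.mem_toFinset.1 hp
    have hqm := hfin.mem_toFinset.1 hq
    exact le_antisymm hpq (hqm.2 ⟨hpm.1.1, bot_le⟩ hpq)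
  have hnotle : ∀ p ∈ S, ¬I ≤ p := fun p hp =>
    not_le_minimal hfin hfaithful p (hfin.mem_toFinset.1 hp)
  -- Phase 1: make the i₀-th entry avoid all minimal primes.
  set s₀ : Finset (Fin n) := Finset.univ.erase i₀ with hs₀def
  set J : Ideal R := Ideal.span (Set.range fun j : {x // x ∈ s₀} => m j.1) with hJdef
  have hJle : ∀ p : Ideal R, J ≤ p ↔ ∀ j ∈ s₀, m j ∈ p := by
    intro p
    rw [hJdef, Ideal.span_le]
    constructor
    · intro h j hj
      exact h ⟨⟨j, hj⟩, rfl⟩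
    · rintro h _ ⟨⟨j, hj⟩, rfl⟩
      exact h j hj
  have hJhyp : ∀ p ∈ S, m i₀ ∈ p → ¬J ≤ p := by
    intro p hp hmi₀ hJp
    apply hnotle p hp
    rw [← hm, Ideal.span_le]
    rintro _ ⟨k, rfl⟩
    by_cases hk : k = i₀
    · exact hk ▸ hmi₀
    · exact (hJle p).1 hJp k (Finset.mem_erase.2 ⟨hk, Finset.mem_univ k⟩)
  obtain ⟨a, haJ, haS⟩ := avoid hprime hincomp (m i₀) J hJhyp
  obtain ⟨c, hc⟩ := (Finsupp.mem_ideal_span_range_iff_exists_finsupp).1 (hJdef ▸ haJ)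
  set c' : Fin n → R := fun j => if h : j ∈ s₀ then c ⟨j, h⟩ else 0 with hc'def
  have hsum : ∑ j ∈ s₀, c' j * m j = a := by
    rw [← hc]
    rw [Finsupp.sum_fintype _ _ (by intro i; simp)]
    rw [← Finset.sum_attach s₀ (fun j => c' j * m j)]
    refine Finset.sum_congr rfl fun j _ => ?_
    rw [hc'def]
    simp [j.2]
  set m1 : Fin n → R := Function.update m i₀ (m i₀ + ∑ j ∈ s₀, c' j * m j) with hm1def
  have helem1 : ElemEquiv m m1 := elem_phase1 m i₀ c' s₀ (Finset.notMem_erase i₀ _)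
  have hm1i₀ : m1 i₀ = m i₀ + a := by rw [hm1def, Function.update_self, hsum]
  have hm1i₀reg : ∀ p ∈ S, m1 i₀ ∉ p := fun p hp => hm1i₀ ▸ haS p hp
  -- Phase 2: fix up the other entries using the regular pivot.
  have hchoice : ∀ j : Fin n, ∃ d : R, ∀ p ∈ S, m1 j + d * m1 i₀ ∉ p := by
    intro j
    obtain ⟨b, hbJ, hbS⟩ := avoid hprime hincomp (m1 j) (Ideal.span {m1 i₀})
      (fun p hp _ hle => hm1i₀reg p hp (hle (Ideal.subset_span rfl)))
    obtain ⟨d, hd⟩ := Ideal.mem_span_singleton'.1 hbJ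
    exact ⟨d, fun p hp => by rw [hd]; exact hbS p hp⟩
  choose d hd using hchoice
  set m2 : Fin n → R := fun j => if j ∈ s₀ then m1 j + d j * m1 i₀ else m1 j with hm2def
  have helem2 : ElemEquiv m1 m2 := elem_phase2 m1 i₀ d s₀ (Finset.notMem_erase i₀ _)
  have helem : ElemEquiv m m2 := elem_trans helem1 helem2
  have hreg : ∀ j, m2 j ∈ nonZeroDivisors R := by
    intro j
    apply regular_of_avoid
    intro p hp
    have hpS : p ∈ S := hfin.mem_toFinset.2 hp
    have hm2eq : m2 j = if j ∈ s₀ then m1 j + d j * m1 i₀ else m1 j := rfl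
    rw [hm2eq]
    by_cases hj : j ∈ s₀
    · rw [if_pos hj]
      exact hd j p hpS
    · rw [if_neg hj]
      have : j = i₀ := by
        by_contra h
        exact hj (Finset.mem_erase.2 ⟨h, Finset.mem_univ j⟩)
      exact this ▸ hm1i₀reg p hpS
  obtain ⟨hspan, L, hL, hprod⟩ := helem
  exact ⟨m2, L, by rw [hspan, hm], hreg, hL, hprod⟩
end

section
/- Let R ⊆ S ⊆ K(R) be commutative rings with S a principal ideal domain, and let I be a two-generated ideal of R. Then the conductor (R:S) = {r ∈ R : rS ⊆ R} is contained in Fitt₁(I). -/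
set_option synthInstance.maxHeartbeats 1000000 in
set_option maxHeartbeats 1000000 in
/-- Let `R ⊆ S ⊆ K(R)` with `S` a principal ideal domain, and let `I`
be the two-generated ideal with generating pair `(a, b)`. Then the conductor
`(R : S) = {r ∈ R | r S ⊆ R}` is contained in `Fitt₁(I)`. -/
theorem conductor_le_fitting {R : Type*} [CommRing R]
    (S : Subalgebra R (FractionRing R)) [IsDomain S] [IsPrincipalIdealRing S]
    (a b : R) (I : Ideal R) (hI : I = Ideal.span {a, b})
    (r : R)
    (hr : ∀ s ∈ S, ∃ t : R,
      algebraMap R (FractionRing R) r * s = algebraMap R (FractionRing R) t) :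
    r ∈ relFittingIdeal a b := by
  classical
  set f := algebraMap R (FractionRing R) with hf
  have finj : Function.Injective f := IsFractionRing.injective R (FractionRing R)
  set A : S := ⟨f a, S.algebraMap_mem a⟩ with hAdef
  set B : S := ⟨f b, S.algebraMap_mem b⟩ with hBdef
  obtain ⟨d, hd⟩ := (IsPrincipalIdealRing.principal (Ideal.span {A, B})).principal
  have hA : A ∈ Ideal.span {A, B} := Ideal.subset_span (by simp)
  have hB : B ∈ Ideal.span {A, B} := Ideal.subset_span (by simp)
  rw [hd] at hA hB
  obtain ⟨u, hu⟩ := Ideal.mem_span_singleton'.mp hA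
  obtain ⟨v, hv⟩ := Ideal.mem_span_singleton'.mp hB
  have hdJ : d ∈ Ideal.span {A, B} := hd ▸ Ideal.mem_span_singleton_self d
  obtain ⟨x, y, hxy⟩ := Ideal.mem_span_pair.mp hdJ
  obtain ⟨p, hp⟩ := hr ((x * u : S) : FractionRing R) (x * u).2
  obtain ⟨q, hq⟩ := hr ((x * v : S) : FractionRing R) (x * v).2
  obtain ⟨p2, hp2⟩ := hr ((y * u : S) : FractionRing R) (y * u).2
  obtain ⟨q2, hq2⟩ := hr ((y * v : S) : FractionRing R) (y * v).2
  have hp' : f r * ((x : FractionRing R) * (u : FractionRing R)) = f p := by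
    exact_mod_cast hp
  have hq' : f r * ((x : FractionRing R) * (v : FractionRing R)) = f q := by
    exact_mod_cast hq
  have hp2' : f r * ((y : FractionRing R) * (u : FractionRing R)) = f p2 := by
    exact_mod_cast hp2
  have hq2' : f r * ((y : FractionRing R) * (v : FractionRing R)) = f q2 := by
    exact_mod_cast hq2
  have key : v * A = u * B := by rw [← hu, ← hv]; ring
  have hkeyF : (v : FractionRing R) * f a = (u : FractionRing R) * f b := by
    simpa using congrArg Subtype.val key
  have hpgen : (-q) * a + p * b = 0 := by
    apply finj
    simp only [map_add, map_mul, map_neg, map_zero]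
    linear_combination (-(f b)) * hp' + f a * hq' +
      (-(f r * (x : FractionRing R))) * hkeyF
  have hq2gen : q2 * a + (-p2) * b = 0 := by
    apply finj
    simp only [map_add, map_mul, map_neg, map_zero]
    linear_combination (-(f a)) * hq2' + f b * hp2' +
      (f r * (y : FractionRing R)) * hkeyF
  by_cases hd0 : d = 0
  · have ha0 : a = 0 := by
      apply finj
      have : (A : FractionRing R) = 0 := by
        rw [← hu, hd0]; push_cast; ring
      simpa [hAdef] using this
    exact Ideal.subset_span (Or.inl ⟨0, by rw [ha0]; ring⟩)
  · have hone : x * u + y * v = 1 := by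
      have h1 : (x * u + y * v) * d = 1 * d := by
        rw [one_mul]
        calc (x * u + y * v) * d = x * (u * d) + y * (v * d) := by ring
          _ = x * A + y * B := by rw [hu, hv]
          _ = d := hxy
      exact mul_right_cancel₀ hd0 h1
    have honeF : (x : FractionRing R) * u + (y : FractionRing R) * v = 1 := by
      exact_mod_cast congrArg Subtype.val hone
    have hreq : r = p + q2 := by
      apply finj
      simp only [map_add]
      linear_combination hp' + hq2' + (-(f r)) * honeF
    rw [hreq]
    exact Ideal.add_mem _ (Ideal.subset_span (Or.inr ⟨-q, hpgen⟩))
      (Ideal.subset_span (Or.inl ⟨-p2, hq2gen⟩))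
end

section
/- Let p be a prime and R = ℤ[C_p] the integral group ring of a cyclic group of order p with generator c. Then for every faithful non-invertible ideal I of R one has Fitt₁(I) = R(c−1) + Rp, and this ideal is maximal in R. -/
open scoped nonZeroDivisors


/-- The integral group ring `ℤ[C_p] = ℤ[x]/(x^p - 1)` of the cyclic group of order `p`. -/
def CyclicGroupRing (p : ℕ) : Type :=
  Polynomial ℤ ⧸ Ideal.span {(Polynomial.X : Polynomial ℤ) ^ p - 1}

noncomputable instance (p : ℕ) : CommRing (CyclicGroupRing p) := by
  unfold CyclicGroupRing; infer_instance

/-- The generator `c` of the cyclic group, i.e. the image of `x` in `ℤ[x]/(x^p - 1)`. -/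
noncomputable def cyclicGen (p : ℕ) : CyclicGroupRing p :=
  Ideal.Quotient.mk _ Polynomial.X

open Polynomial

namespace CGR
variable (p : ℕ)

noncomputable def mkR : Polynomial ℤ →+* CyclicGroupRing p := Ideal.Quotient.mk _

lemma mkR_surj : Function.Surjective (mkR p) := Ideal.Quotient.mk_surjective

lemma mkR_ker {f : ℤ[X]} : mkR p f = 0 ↔ (X ^ p - 1 : ℤ[X]) ∣ f := by
  exact Ideal.Quotient.eq_zero_iff_mem.trans Ideal.mem_span_singleton

noncomputable def liftR {S : Type*} [CommRing S] (s : S) (hs : s ^ p = 1) :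
    CyclicGroupRing p →+* S :=
  Ideal.Quotient.lift _ (eval₂RingHom (Int.castRingHom S) s) (by
    intro a ha
    rw [Ideal.mem_span_singleton] at ha
    obtain ⟨t, rfl⟩ := ha
    simp [hs])

@[simp] lemma liftR_mk {S : Type*} [CommRing S] (s : S) (hs : s ^ p = 1) (f : ℤ[X]) :
    liftR p s hs (mkR p f) = eval₂ (Int.castRingHom S) s f := rfl

@[simp] lemma liftR_gen {S : Type*} [CommRing S] (s : S) (hs : s ^ p = 1) :
    liftR p s hs (cyclicGen p) = s := by
  show liftR p s hs (mkR p X) = s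
  simp

end CGR

namespace CGR
variable (p : ℕ)

local notation "R" => CyclicGroupRing p

noncomputable def sg : R := cyclicGen p - 1

noncomputable def ee : R := mkR p (∑ i ∈ Finset.range p, X ^ i)

lemma mk_X_sub_one : mkR p (X - 1) = sg p := by
  simp [sg, cyclicGen, mkR, map_sub]
  rfl

lemma sg_mul_ee : sg p * ee p = 0 := by
  rw [← mk_X_sub_one, ee, ← map_mul, mul_comm]
  rw [mkR_ker]
  rw [geom_sum_mul]

noncomputable def pi0 : R →+* ℤ := liftR p 1 (one_pow p)

@[simp] lemma pi0_mk (f : ℤ[X]) : pi0 p (mkR p f) = f.eval 1 := by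
  show eval₂ (Int.castRingHom ℤ) 1 f = f.eval 1
  simp [eval₂_eq_eval_map]

@[simp] lemma pi0_sg : pi0 p (sg p) = 0 := by
  rw [← mk_X_sub_one, pi0_mk]; simp

@[simp] lemma pi0_ee : pi0 p (ee p) = p := by
  rw [ee, pi0_mk]; simp

lemma pi0_ker {z : R} (hz : pi0 p z = 0) : ∃ t, z = sg p * t := by
  obtain ⟨f, rfl⟩ := mkR_surj p z
  rw [pi0_mk] at hz
  obtain ⟨g, hg⟩ := (dvd_iff_isRoot ).mpr hz
  rw [C_1] at hg
  exact ⟨mkR p g, by rw [← mk_X_sub_one, ← map_mul, ← hg]⟩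

noncomputable def mI : Ideal R := Ideal.span {cyclicGen p - 1, (p : R)}

lemma mem_mI_iff {z : R} : z ∈ mI p ↔ (p:ℤ) ∣ pi0 p z := by
  constructor
  · intro hz
    obtain ⟨u, v, huv⟩ := Ideal.mem_span_pair.mp hz
    have : pi0 p z = pi0 p u * 0 + pi0 p v * p := by
      rw [← huv, map_add, map_mul, map_mul]
      have h1 : pi0 p (cyclicGen p - 1) = 0 := pi0_sg p
      have h2 : pi0 p ((p:R)) = (p:ℤ) := by simp [map_natCast]
      rw [h1, h2]
    rw [this]; ring_nf; exact ⟨pi0 p v, by ring⟩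
  · intro ⟨k, hk⟩
    obtain ⟨f, rfl⟩ := mkR_surj p z
    rw [pi0_mk] at hk
    have hroot : ((f - C (f.eval 1)).eval 1 = 0) := by simp
    obtain ⟨g, hg⟩ := (dvd_iff_isRoot).mpr hroot
    rw [C_1] at hg
    have : mkR p f = sg p * mkR p g + (p : R) * (k : R) := by
      rw [← mk_X_sub_one, ← map_mul, ← hg]
      have : mkR p (C (f.eval 1)) = ((f.eval 1 : ℤ) : R) := by
        exact eq_intCast ((mkR p).comp C) _
      rw [map_sub, this, hk]
      push_cast
      ring
    rw [this, ← mk_X_sub_one]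
    apply Ideal.add_mem
    · exact Ideal.mul_mem_right _ _ (Ideal.subset_span (by rw[mk_X_sub_one]; left; rfl))
    · exact Ideal.mul_mem_right _ _ (Ideal.subset_span (by right; rfl))

lemma mI_maximal (hp : p.Prime) : (mI p).IsMaximal := by
  haveI := Fact.mk hp
  have hφ : Function.Surjective ((Int.castRingHom (ZMod p)).comp (pi0 p)) := by
    intro n
    obtain ⟨k, hk⟩ := ZMod.intCast_surjective (n := p) n
    exact ⟨(k : R), by rw [RingHom.comp_apply, show pi0 p (k:R) = k from eq_intCast ((pi0 p).comp (Int.castRingHom R)) k, eq_intCast, hk]⟩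
  have hker : RingHom.ker ((Int.castRingHom (ZMod p)).comp (pi0 p)) = mI p := by
    ext z
    rw [RingHom.mem_ker, RingHom.comp_apply, mem_mI_iff]
    exact ZMod.intCast_zmod_eq_zero_iff_dvd _ _
  rw [← hker]
  exact RingHom.ker_isMaximal_of_surjective _ hφ

end CGR

namespace CGR
section Cyclo
variable (p : ℕ) (hp : p.Prime)

local notation "R" => CyclicGroupRing p

end Cyclo

abbrev Pp (p : ℕ) (hp : p.Prime) : ℕ+ := ⟨p, hp.pos⟩
abbrev KK (p : ℕ) (hp : p.Prime) : Type := CyclotomicField (Pp p hp) ℚ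
abbrev OO (p : ℕ) (hp : p.Prime) : Type := NumberField.RingOfIntegers (KK p hp)

instance (p : ℕ) (hp : p.Prime) : IsCyclotomicExtension {((Pp p hp : ℕ+) : ℕ)} ℚ (KK p hp) :=
  CyclotomicField.isCyclotomicExtension _ ℚ

section Cyclo2
variable (p : ℕ) (hp : p.Prime)
local notation "R" => CyclicGroupRing p
local notation "K" => KK p hp
local notation "O" => OO p hp

noncomputable def zz : K := IsCyclotomicExtension.zeta (Pp p hp) ℚ K

lemma zz_spec : IsPrimitiveRoot (zz p hp) ((Pp p hp : ℕ+) : ℕ) :=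
  IsCyclotomicExtension.zeta_spec (Pp p hp) ℚ K

noncomputable def zO : O := IsPrimitiveRoot.toInteger (k := Pp p hp) (zz_spec p hp)

lemma zO_prim : IsPrimitiveRoot (zO p hp) ((Pp p hp : ℕ+) : ℕ) :=
  IsPrimitiveRoot.toInteger_isPrimitiveRoot (zz_spec p hp)

lemma zO_pow : (zO p hp) ^ p = 1 := (zO_prim p hp).pow_eq_one

lemma zO_coe : algebraMap O K (zO p hp) = zz p hp := rfl

noncomputable def pi1 : R →+* O := liftR p (zO p hp) (zO_pow p hp)

@[simp] lemma pi1_gen : pi1 p hp (cyclicGen p) = zO p hp := liftR_gen p _ _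

lemma pi1_mk (f : ℤ[X]) : pi1 p hp (mkR p f) = aeval (zO p hp) f := by
  show eval₂ (Int.castRingHom O) (zO p hp) f = _
  rw [aeval_def, algebraMap_int_eq]

lemma pi1_surjective : Function.Surjective (pi1 p hp) := by
  haveI : Fact (Nat.Prime ((Pp p hp : ℕ+) : ℕ)) := Fact.mk hp
  intro w
  have htop : Algebra.adjoin ℤ ({zO p hp} : Set O) = ⊤ := by
    have h2 := (IsPrimitiveRoot.integralPowerBasis (zz_spec p hp)).adjoin_gen_eq_top
    rwa [IsPrimitiveRoot.integralPowerBasis_gen] at h2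
  have hw : w ∈ Algebra.adjoin ℤ ({zO p hp} : Set O) := htop ▸ Algebra.mem_top
  rw [Algebra.adjoin_singleton_eq_range_aeval] at hw
  obtain ⟨f, hf⟩ := hw
  exact ⟨mkR p f, by rw [pi1_mk]; exact hf⟩

lemma zO_integral : IsIntegral ℤ (zO p hp) := (zO_prim p hp).isIntegral hp.pos

lemma minpoly_zO : minpoly ℤ (zO p hp) = cyclotomic p ℤ := by
  haveI := Fact.mk hp
  have h1 : minpoly ℤ (zz p hp) = cyclotomic p ℤ :=
    (cyclotomic_eq_minpoly (zz_spec p hp) hp.pos).symm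
  have h2 : minpoly ℤ (algebraMap O K (zO p hp)) = minpoly ℤ (zO p hp) :=
    minpoly.algebraMap_eq (NumberField.RingOfIntegers.coe_injective) _
  rw [← h2]
  exact h1

lemma pi1_ker {z : R} (hz : pi1 p hp z = 0) : ∃ t, z = ee p * t := by
  haveI := Fact.mk hp
  obtain ⟨f, rfl⟩ := mkR_surj p z
  rw [pi1_mk] at hz
  have hdvd : minpoly ℤ (zO p hp) ∣ f :=
    minpoly.isIntegrallyClosed_dvd (zO_integral p hp) hz
  rw [minpoly_zO p hp, cyclotomic_prime ℤ p] at hdvd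
  obtain ⟨g, hg⟩ := hdvd
  exact ⟨mkR p g, by rw [ee, ← map_mul, ← hg]⟩

lemma pi1_sg_ne : pi1 p hp (sg p) ≠ 0 := by
  rw [sg, map_sub, map_one, pi1_gen, sub_ne_zero]
  intro h
  refine (zz_spec p hp).ne_one hp.one_lt ?_
  have h2 := congrArg (algebraMap O K) h
  rw [zO_coe, map_one] at h2
  exact h2

lemma pair_inj {z : R} (h0 : pi0 p z = 0) (h1 : pi1 p hp z = 0) : z = 0 := by
  haveI := Fact.mk hp
  obtain ⟨f, rfl⟩ := mkR_surj p z
  rw [pi0_mk] at h0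
  rw [pi1_mk] at h1
  have hdvd : cyclotomic p ℤ ∣ f := by
    rw [← minpoly_zO p hp]
    exact minpoly.isIntegrallyClosed_dvd (zO_integral p hp) h1
  obtain ⟨g, hg⟩ := hdvd
  have hx : (X - 1 : ℤ[X]) ∣ g := by
    have hprime : Prime (X - C 1 : ℤ[X]) := prime_X_sub_C 1
    have hd : (X - C 1 : ℤ[X]) ∣ cyclotomic p ℤ * g := by
      rw [← hg, C_1]
      exact (dvd_iff_isRoot).mpr h0
    rcases hprime.2.2 _ _ hd with h | h
    · exfalso
      have hev := @eval_one_cyclotomic_prime ℤ _ p (Fact.mk hp)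
      obtain ⟨u, hu⟩ := h
      rw [hu] at hev
      simp only [eval_mul, eval_sub, eval_X, eval_C, sub_self, zero_mul] at hev
      exact hp.ne_zero (by exact_mod_cast hev.symm)
    · rwa [C_1] at h
  obtain ⟨h, hh⟩ := hx
  rw [mkR_ker, hg, hh]
  have hfac : (X ^ p - 1 : ℤ[X]) = (X - 1) * cyclotomic p ℤ := by
    rw [cyclotomic_prime ℤ p, mul_comm, geom_sum_mul]
  rw [hfac]
  exact ⟨h, by ring⟩

include hp in
lemma sg_ne_zero : sg p ≠ 0 := fun h => pi1_sg_ne p hp (by rw [h, map_zero])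

include hp in
lemma ee_ne_zero : ee p ≠ 0 := by
  intro h
  have h2 := congrArg (pi0 p) h
  rw [pi0_ee, map_zero] at h2
  exact hp.ne_zero (by exact_mod_cast h2)

end Cyclo2
end CGR


lemma dedekind_extract {A K : Type*} [CommRing A] [IsDomain A] [IsDedekindDomain A] [Field K]
    [Algebra A K] [IsFractionRing A K] {J : Ideal A} (hJ : J ≠ ⊥) :
    ∃ d : A, d ≠ 0 ∧ ∃ (k : ℕ) (w : Fin k → A) (y : Fin k → A),
      (∀ i, y i ∈ J) ∧ (∀ i, ∀ z ∈ J, d ∣ w i * z) ∧ ∑ i, w i * y i = d := by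
  classical
  have hJne : (J : FractionalIdeal A⁰ K) ≠ 0 := FractionalIdeal.coeIdeal_ne_zero.mpr hJ
  have hmul : (J : FractionalIdeal A⁰ K) * (J : FractionalIdeal A⁰ K)⁻¹ = 1 :=
    mul_inv_cancel₀ hJne
  have h1 : (1 : K) ∈ ((J : FractionalIdeal A⁰ K) * (J : FractionalIdeal A⁰ K)⁻¹ :
      FractionalIdeal A⁰ K) := by rw [hmul]; exact FractionalIdeal.one_mem_one _
  rw [← FractionalIdeal.mem_coe, FractionalIdeal.coe_mul] at h1
  set S0 : Set K := {z | ∃ q ∈ ((J : FractionalIdeal A⁰ K)⁻¹ : FractionalIdeal A⁰ K),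
      ∃ j ∈ J, z = q * algebraMap A K j} with hS0
  have hspan : (1 : K) ∈ Submodule.span A S0 := by
    refine Submodule.mul_induction_on h1 ?_ ?_
    · intro m hm n hn
      rw [FractionalIdeal.mem_coe, FractionalIdeal.mem_coeIdeal] at hm
      obtain ⟨j, hj, rfl⟩ := hm
      rw [FractionalIdeal.mem_coe] at hn
      exact Submodule.subset_span ⟨n, hn, j, hj, by ring⟩
    · intro x y hx hy
      exact Submodule.add_mem _ hx hy
  rw [Submodule.mem_span_set] at hspan
  obtain ⟨c, hcsupp, hcsum⟩ := hspan
  choose q hq j hj hz using fun z (hzs : z ∈ c.support) => hcsupp hzs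
  set qq : {z : K // z ∈ c.support} → K := fun i => algebraMap A K (c i.1) * q i.1 i.2 with hqq
  have hqqinv : ∀ i : {z : K // z ∈ c.support}, qq i ∈ ((J : FractionalIdeal A⁰ K)⁻¹ : FractionalIdeal A⁰ K) := by
    intro i
    have h2 := Submodule.smul_mem (((J : FractionalIdeal A⁰ K)⁻¹ : FractionalIdeal A⁰ K) :
      Submodule A K) (c i.1) (FractionalIdeal.mem_coe.mpr (hq i.1 i.2))
    rw [FractionalIdeal.mem_coe] at h2
    rw [hqq]
    simpa [Algebra.smul_def] using h2
  obtain ⟨b, hb⟩ := IsLocalization.exist_integer_multiples_of_finite A⁰ qq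
  choose w hw using hb
  have halg : Function.Injective (algebraMap A K) := IsFractionRing.injective A K
  set e := (Fintype.equivFin {z : K // z ∈ c.support})
  refine ⟨(b : A), nonZeroDivisors.coe_ne_zero b, Fintype.card {z : K // z ∈ c.support},
    fun i0 => w (e.symm i0), fun i0 => j (e.symm i0).1 (e.symm i0).2,
    fun i0 => hj _ _, ?_, ?_⟩
  · intro i0 z hzJ
    set i := e.symm i0
    have hqz : qq i * algebraMap A K z ∈ (1 : FractionalIdeal A⁰ K) := by
      exact (FractionalIdeal.mem_inv_iff hJne).mp (hqqinv i) _
        (FractionalIdeal.mem_coeIdeal_of_mem A⁰ hzJ)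
    rw [FractionalIdeal.mem_one_iff] at hqz
    obtain ⟨u, hu⟩ := hqz
    refine ⟨u, halg ?_⟩
    rw [map_mul, map_mul, hw i, hu]
    simp only [Algebra.smul_def]
    ring
  · apply halg
    rw [map_sum]
    have : ∀ i0, algebraMap A K (w (e.symm i0) * j (e.symm i0).1 (e.symm i0).2)
        = (b : A) • (c (e.symm i0).1 • (e.symm i0).1) := by
      intro i0
      rw [map_mul, hw (e.symm i0)]
      have hzz := hz (e.symm i0).1 (e.symm i0).2
      calc (b:A) • qq (e.symm i0) * algebraMap A K (j (e.symm i0).1 (e.symm i0).2)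
          = algebraMap A K (b:A) * (algebraMap A K (c (e.symm i0).1) *
            (q (e.symm i0).1 (e.symm i0).2 * algebraMap A K (j (e.symm i0).1 (e.symm i0).2))) := by
            rw [Algebra.smul_def, hqq]; ring
        _ = _ := by rw [← hzz, Algebra.smul_def (b:A), Algebra.smul_def (c _)]
    rw [Finset.sum_congr rfl (fun i0 _ => this i0), ← Finset.smul_sum]
    have hsum2 : ∑ i0 : Fin (Fintype.card {z : K // z ∈ c.support}), c (e.symm i0).1 • (e.symm i0).1
        = ∑ i : {z : K // z ∈ c.support}, c i.1 • i.1 := by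
      exact Fintype.sum_equiv e.symm _ _ (fun i0 => rfl)
    rw [hsum2]
    have hsum3 : ∑ i : {z : K // z ∈ c.support}, c i.1 • (i.1 : K) = ∑ z ∈ c.support, c z • z := by
      show ∑ i ∈ (Finset.univ : Finset {z : K // z ∈ c.support}), c i.1 • (i.1 : K) = _
      rw [← Finset.sum_attach c.support (fun z => c z • z)]
      rfl
    rw [hsum3]
    rw [Finsupp.sum] at hcsum
    rw [hcsum, Algebra.smul_def, mul_one]


section Generic
variable {R : Type*} [CommRing R]

def Good (I : Ideal R) (t : R) : Prop :=
  ∃ δ ∈ nonZeroDivisors R, ∃ (k : ℕ) (n x : Fin k → R),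
    (∀ i, x i ∈ I) ∧ (∀ i, ∀ z ∈ I, ∃ y, n i * z = δ * y) ∧ ∑ i, n i * x i = δ * t

lemma good_mem_fitt {I : Ideal R} {a b t : R} (hI : I = Ideal.span {a, b})
    (hg : Good I t) : t ∈ relFittingIdeal a b := by
  obtain ⟨δ, hδ, k, n, x, hxI, hmul, hsum⟩ := hg
  have ha : a ∈ I := hI ▸ Ideal.subset_span (Set.mem_insert _ _)
  have hb : b ∈ I := hI ▸ Ideal.subset_span (Set.mem_insert_of_mem _ rfl)
  have hcancel : ∀ u v : R, δ * u = δ * v → u = v := by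
    intro u v huv
    have h0 : (u - v) * δ = 0 := by
      rw [sub_mul, mul_comm u δ, mul_comm v δ, huv, sub_self]
    exact sub_eq_zero.mp (mem_nonZeroDivisors_iff_right.mp hδ _ h0)
  choose α hα using fun i => hmul i a ha
  choose β hβ using fun i => hmul i b hb
  have hsyz : ∀ i, β i * a + (-(α i)) * b = 0 := by
    intro i
    have : δ * (β i * a + (-(α i)) * b) = δ * 0 := by
      rw [mul_zero, mul_add]
      have e1 : δ * (β i * a) = (n i * b) * a := by rw [hβ]; ring
      have e2 : δ * ((-(α i)) * b) = -((n i * a) * b) := by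
        rw [show δ * ((-(α i)) * b) = -(δ * α i * b) by ring, ← hα]
      rw [e1, e2]; ring
    exact hcancel _ _ this
  have hβmem : ∀ i, β i ∈ relFittingIdeal a b := fun i =>
    Ideal.subset_span (Or.inl ⟨-(α i), hsyz i⟩)
  have hαmem : ∀ i, α i ∈ relFittingIdeal a b := fun i =>
    Ideal.subset_span (Or.inr ⟨-(β i), by linear_combination -(hsyz i)⟩)
  choose u v huv using fun i => Ideal.mem_span_pair.mp (hI ▸ hxI i)
  have hkey : δ * t = δ * (∑ i, (u i * α i + v i * β i)) := by
    rw [← hsum, Finset.mul_sum]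
    refine Finset.sum_congr rfl fun i _ => ?_
    rw [← huv i]
    calc n i * (u i * a + v i * b) = u i * (n i * a) + v i * (n i * b) := by ring
      _ = u i * (δ * α i) + v i * (δ * β i) := by rw [hα, hβ]
      _ = δ * (u i * α i + v i * β i) := by ring
  rw [hcancel _ _ hkey]
  exact Ideal.sum_mem _ fun i _ => Ideal.add_mem _
    (Ideal.mul_mem_left _ _ (hαmem i)) (Ideal.mul_mem_left _ _ (hβmem i))

lemma good_mem_T {I : Ideal R} {t : R} (hg : Good I t) :
    algebraMap R (FractionRing R) t ∈
      (Submodule.map (Algebra.linearMap R (FractionRing R)) I *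
        (1 / Submodule.map (Algebra.linearMap R (FractionRing R)) I)) := by
  obtain ⟨δ, hδ, k, n, x, hxI, hmul, hsum⟩ := hg
  set Q := FractionRing R
  set φ := algebraMap R Q with hφ
  have hu : IsUnit (φ δ) := IsLocalization.map_units Q ⟨δ, hδ⟩
  obtain ⟨uδ, huδ⟩ := hu
  set S := Submodule.map (Algebra.linearMap R Q) I with hS
  have hq : ∀ i, (φ (n i) * ((uδ⁻¹ : Qˣ) : Q)) ∈ (1 / S : Submodule R Q) := by
    intro i
    rw [Submodule.mem_div_iff_forall_mul_mem]
    rintro yy ⟨z, hz, rfl⟩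
    obtain ⟨w, hw⟩ := hmul i z hz
    have h2 : φ (n i) * φ z = φ δ * φ w := by
      rw [← map_mul, ← map_mul, hw]
    have h3 : φ (n i) * ((uδ⁻¹ : Qˣ) : Q) * (Algebra.linearMap R Q) z = φ w := by
      show φ (n i) * ((uδ⁻¹ : Qˣ) : Q) * φ z = φ w
      calc φ (n i) * ((uδ⁻¹ : Qˣ) : Q) * φ z
          = (φ (n i) * φ z) * ((uδ⁻¹ : Qˣ) : Q) := by ring
        _ = (φ δ * φ w) * ((uδ⁻¹ : Qˣ) : Q) := by rw [h2]
        _ = φ w * (((uδ : Q)) * ((uδ⁻¹ : Qˣ) : Q)) := by rw [huδ]; ring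
        _ = φ w := by rw [Units.mul_inv, mul_one]
    rw [h3]
    exact Submodule.mem_one.mpr ⟨w, rfl⟩
  have hteq : φ t = ∑ i, (φ (x i)) * (φ (n i) * ((uδ⁻¹ : Qˣ) : Q)) := by
    have h2 : φ (∑ i, n i * x i) = φ (δ * t) := congrArg φ hsum
    rw [map_sum, map_mul] at h2
    calc φ t = (φ δ * φ t) * ((uδ⁻¹ : Qˣ) : Q) := by
          rw [← huδ, mul_comm ((uδ : Q)) (φ t), mul_assoc, Units.mul_inv, mul_one]
      _ = (∑ i, φ (n i * x i)) * ((uδ⁻¹ : Qˣ) : Q) := by rw [h2]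
      _ = ∑ i, (φ (x i)) * (φ (n i) * ((uδ⁻¹ : Qˣ) : Q)) := by
          rw [Finset.sum_mul]
          refine Finset.sum_congr rfl fun i _ => by rw [map_mul]; ring
  show φ t ∈ _
  rw [hteq]
  exact Submodule.sum_mem _ fun i _ =>
    Submodule.mul_mem_mul ⟨x i, hxI i, rfl⟩ (hq i)

lemma good_one_inv {I : Ideal R} (hg : Good I 1) :
    Submodule.map (Algebra.linearMap R (FractionRing R)) I *
      (1 / Submodule.map (Algebra.linearMap R (FractionRing R)) I) = 1 := by
  have h1 := good_mem_T hg
  rw [map_one] at h1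
  refine le_antisymm Submodule.mul_one_div_le_one ?_
  rw [Submodule.one_le]
  exact h1

end Generic

namespace CGR
section Constructions
variable (p : ℕ) (hp : p.Prime)
include hp
local notation "R" => CyclicGroupRing p
local notation "O" => OO p hp

lemma pair_inj' {u v : R} (h0 : pi0 p u = pi0 p v) (h1 : pi1 p hp u = pi1 p hp v) : u = v := by
  have := pair_inj p hp (z := u - v) (by rw [map_sub, h0, sub_self]) (by rw [map_sub, h1, sub_self])
  exact sub_eq_zero.mp this

lemma pi1_ee : pi1 p hp (ee p) = 0 := by
  have hgeo : (pi1 p hp (ee p)) * (zO p hp - 1) = 0 := by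
    have : pi1 p hp (ee p) * (pi1 p hp (sg p)) = pi1 p hp (ee p * sg p) := by rw [map_mul]
    rw [show ee p * sg p = 0 by rw [mul_comm]; exact sg_mul_ee p, map_zero] at this
    rw [← this]
    congr 1
    rw [sg, map_sub, map_one, pi1_gen]
  rcases mul_eq_zero.mp hgeo with h | h
  · exact h
  · exact absurd (by rwa [sub_eq_zero] at h) (fun hh => pi1_sg_ne p hp (by
      rw [sg, map_sub, map_one, pi1_gen, hh, sub_self]))

lemma pi1_sg_eq : pi1 p hp (sg p) = zO p hp - 1 := by
  rw [sg, map_sub, map_one, pi1_gen]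

lemma regular_of_pi {δ : R} (h0 : pi0 p δ ≠ 0) (h1 : pi1 p hp δ ≠ 0) :
    δ ∈ nonZeroDivisors R := by
  rw [mem_nonZeroDivisors_iff_right]
  intro t ht
  refine pair_inj p hp ?_ ?_
  · have := congrArg (pi0 p) ht
    rw [map_mul, map_zero] at this
    exact (mul_eq_zero.mp this).resolve_right h0
  · have := congrArg (pi1 p hp) ht
    rw [map_mul, map_zero] at this
    exact (mul_eq_zero.mp this).resolve_right h1

variable {I : Ideal (CyclicGroupRing p)}

lemma exists_pi0_ne (hfaith : ∀ r : R, (∀ x ∈ I, r * x = 0) → r = 0) :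
    ∃ x ∈ I, pi0 p x ≠ 0 := by
  by_contra h
  push_neg at h
  refine (ee_ne_zero p hp) (hfaith (ee p) ?_)
  intro x hx
  obtain ⟨t, rfl⟩ := pi0_ker p (h x hx)
  rw [← mul_assoc, mul_comm (ee p) (sg p), sg_mul_ee, zero_mul]

lemma exists_pi1_ne (hfaith : ∀ r : R, (∀ x ∈ I, r * x = 0) → r = 0) :
    ∃ x ∈ I, pi1 p hp x ≠ 0 := by
  by_contra h
  push_neg at h
  refine (sg_ne_zero p hp) (hfaith (sg p) ?_)
  intro x hx
  obtain ⟨t, rfl⟩ := pi1_ker p hp (h x hx)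
  rw [← mul_assoc, sg_mul_ee, zero_mul]

lemma good_ee (hfaith : ∀ r : R, (∀ x ∈ I, r * x = 0) → r = 0) : Good I (ee p) := by
  obtain ⟨x0, hx0I, hx0⟩ := exists_pi0_ne p hp hfaith
  set J0 : Ideal ℤ := I.map (pi0 p) with hJ0
  obtain ⟨g, hgJ0⟩ := Submodule.IsPrincipal.principal J0
  have hgJ : J0 = Ideal.span {g} := hgJ0
  have hpi0surj : Function.Surjective (pi0 p) := fun k => ⟨(k : R), by
    exact eq_intCast ((pi0 p).comp (Int.castRingHom R)) k⟩
  have hgmem : g ∈ J0 := hgJ ▸ Ideal.subset_span rfl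
  obtain ⟨xg, hxgI, hxg⟩ := Ideal.mem_map_iff_of_surjective _ hpi0surj |>.mp hgmem
  have hg0 : g ≠ 0 := by
    intro hg
    apply hx0
    have : pi0 p x0 ∈ J0 := Ideal.mem_map_of_mem _ hx0I
    rw [hgJ, hg, Ideal.span_singleton_eq_bot.mpr rfl] at this
    simpa using this
  obtain ⟨δ, hδ0, hδ1⟩ : ∃ δ : R, pi0 p δ = g ∧ pi1 p hp δ ≠ 0 := by
    by_cases hb1 : pi1 p hp xg = 0
    · exact ⟨xg + sg p, by rw [map_add, hxg, pi0_sg, add_zero], by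
        rw [map_add, hb1, zero_add]; exact pi1_sg_ne p hp⟩
    · exact ⟨xg, hxg, hb1⟩
  have hδreg : δ ∈ nonZeroDivisors R := regular_of_pi p hp (by rw [hδ0]; exact hg0) hδ1
  refine ⟨δ, hδreg, 1, (fun _ => ee p), (fun _ => xg), fun _ => hxgI, ?_, ?_⟩
  · intro _ z hz
    have : pi0 p z ∈ J0 := Ideal.mem_map_of_mem _ hz
    rw [hgJ, Ideal.mem_span_singleton] at this
    obtain ⟨w, hw⟩ := this
    refine ⟨ee p * (w : R), ?_⟩
    refine pair_inj' p hp ?_ ?_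
    · rw [map_mul, map_mul, map_mul, pi0_ee, hδ0, map_intCast, hw]; push_cast; ring
    · rw [map_mul, map_mul, map_mul, pi1_ee, zero_mul, zero_mul, mul_zero]
  · rw [Fin.sum_univ_one]
    refine pair_inj' p hp ?_ ?_
    · rw [map_mul, map_mul, pi0_ee, hxg, hδ0]; ring
    · rw [map_mul, map_mul, pi1_ee, zero_mul, mul_zero]

lemma good_sg (hfaith : ∀ r : R, (∀ x ∈ I, r * x = 0) → r = 0) : Good I (sg p) := by
  haveI : NumberField (KK p hp) := IsCyclotomicExtension.numberField {(Pp p hp : ℕ)} ℚ _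
  obtain ⟨x1, hx1I, hx1⟩ := exists_pi1_ne p hp hfaith
  set J1 : Ideal O := I.map (pi1 p hp) with hJ1
  have hJ1ne : J1 ≠ ⊥ := by
    intro hbot
    apply hx1
    have : pi1 p hp x1 ∈ J1 := Ideal.mem_map_of_mem _ hx1I
    rw [hbot] at this
    simpa using this
  obtain ⟨d, hd, k, w, y, hyJ, hdvd, hsum⟩ := dedekind_extract (K := KK p hp) hJ1ne
  choose wl hwl using fun i => pi1_surjective p hp (w i)
  have hymem := fun i => Ideal.mem_map_iff_of_surjective _ (pi1_surjective p hp) |>.mp (hyJ i)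
  choose x hxI hx using hymem
  obtain ⟨t0, ht0⟩ := pi1_surjective p hp d
  obtain ⟨δ, hδ1, hδ0⟩ : ∃ δ : R, pi1 p hp δ = d ∧ pi0 p δ ≠ 0 := by
    by_cases hcase : pi0 p t0 + p = 0
    · refine ⟨t0 + 2 * ee p, ?_, ?_⟩
      · rw [map_add, map_mul, pi1_ee, mul_zero, add_zero, ht0]
      · rw [map_add, map_mul, pi0_ee]
        have h2c : pi0 p (2 : R) = 2 := by
          have h2c' : ((2:ℤ) : R) = (2 : R) := by norm_cast
          rw [← h2c', map_intCast]
          norm_num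
        rw [h2c]
        have hppos : 0 < p := hp.pos
        intro hzero
        omega
    · exact ⟨t0 + ee p, by rw [map_add, pi1_ee, add_zero, ht0],
        by rw [map_add, pi0_ee]; exact_mod_cast hcase⟩
  have hδreg : δ ∈ nonZeroDivisors R := regular_of_pi p hp hδ0 (by rw [hδ1]; exact hd)
  refine ⟨δ, hδreg, k, (fun i => sg p * wl i), x, hxI, ?_, ?_⟩
  · intro i z hz
    have hz1 : pi1 p hp z ∈ J1 := Ideal.mem_map_of_mem _ hz
    obtain ⟨u, hu⟩ := hdvd i _ hz1
    obtain ⟨ul, hul⟩ := pi1_surjective p hp u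
    refine ⟨sg p * ul, ?_⟩
    refine pair_inj' p hp ?_ ?_
    · rw [map_mul, map_mul, map_mul, map_mul, pi0_sg]; ring
    · rw [map_mul, map_mul, map_mul, map_mul, hwl, hul, hδ1, pi1_sg_eq]
      rw [mul_assoc, hu]; ring
  · refine pair_inj' p hp ?_ ?_
    · rw [map_sum, map_mul, pi0_sg]
      rw [Finset.sum_congr rfl (fun i _ => by rw [map_mul, map_mul, pi0_sg, zero_mul, zero_mul])]
      rw [Finset.sum_const, smul_zero]; ring
    · have hterm : ∀ i : Fin k, pi1 p hp ((sg p * wl i) * x i) = (zO p hp - 1) * (w i * y i) := by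
        intro i
        rw [map_mul, map_mul, hwl, hx, pi1_sg_eq]
        ring
      rw [map_sum, Finset.sum_congr rfl (fun i _ => hterm i), ← Finset.mul_sum, hsum,
        map_mul, hδ1, pi1_sg_eq]
      ring

end Constructions
end CGR

namespace CGR
section Final
variable (p : ℕ) (hp : p.Prime)
local notation "R" => CyclicGroupRing p

lemma e_sub_p : ∃ h : CyclicGroupRing p, ee p - (p : CyclicGroupRing p) = sg p * h := by
  have hroot : ((∑ i ∈ Finset.range p, X ^ i : ℤ[X]) - (p : ℤ[X])).eval 1 = 0 := by
    simp
  obtain ⟨g, hg⟩ := (dvd_iff_isRoot).mpr hroot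
  rw [C_1] at hg
  refine ⟨mkR p g, ?_⟩
  rw [← mk_X_sub_one, ← map_mul, ← hg, map_sub, ee, map_natCast]

include hp

lemma upper_helper {I : Ideal R} {a b r s : R}
    (hI : I = Ideal.span {a, b})
    (hfaith : ∀ t : R, (∀ x ∈ I, t * x = 0) → t = 0)
    (hNI : ¬ (Submodule.map (Algebra.linearMap R (FractionRing R)) I *
          (1 / Submodule.map (Algebra.linearMap R (FractionRing R)) I) = 1))
    (hsyz : r * a + s * b = 0) : r ∈ mI p := by
  by_contra hrm
  have hbI : b ∈ I := hI ▸ Ideal.subset_span (Set.mem_insert_of_mem _ rfl)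
  by_cases hb1 : pi1 p hp b = 0
  · obtain ⟨x1, hx1I, hx1⟩ := exists_pi1_ne p hp hfaith
    have ha1 : pi1 p hp a ≠ 0 := by
      intro ha1
      apply hx1
      obtain ⟨u, v, huv⟩ := Ideal.mem_span_pair.mp (hI ▸ hx1I)
      rw [← huv, map_add, map_mul, map_mul, ha1, hb1, mul_zero, mul_zero, add_zero]
    have hmul0 : pi1 p hp r * pi1 p hp a = 0 := by
      have hc := congrArg (pi1 p hp) hsyz
      rw [map_add, map_mul, map_mul, hb1, mul_zero, add_zero, map_zero] at hc
      exact hc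
    have hr1 : pi1 p hp r = 0 := (mul_eq_zero.mp hmul0).resolve_right ha1
    obtain ⟨t, rfl⟩ := pi1_ker p hp hr1
    apply hrm
    rw [mem_mI_iff, map_mul, pi0_ee]
    exact ⟨pi0 p t, rfl⟩
  by_cases hb0 : pi0 p b = 0
  · obtain ⟨x0, hx0I, hx0⟩ := exists_pi0_ne p hp hfaith
    have ha0 : pi0 p a ≠ 0 := by
      intro ha0
      apply hx0
      obtain ⟨u, v, huv⟩ := Ideal.mem_span_pair.mp (hI ▸ hx0I)
      rw [← huv, map_add, map_mul, map_mul, ha0, hb0, mul_zero, mul_zero, add_zero]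
    have hmul0 : pi0 p r * pi0 p a = 0 := by
      have hc := congrArg (pi0 p) hsyz
      rw [map_add, map_mul, map_mul, hb0, mul_zero, add_zero, map_zero] at hc
      exact hc
    have hr0 : pi0 p r = 0 := (mul_eq_zero.mp hmul0).resolve_right ha0
    exact hrm (by rw [mem_mI_iff, hr0]; exact dvd_zero _)
  · have hbreg : b ∈ nonZeroDivisors R := regular_of_pi p hp hb0 hb1
    have hgoodr : Good I r := by
      refine ⟨b, hbreg, 1, fun _ => r, fun _ => b, fun _ => hbI, ?_, ?_⟩
      · intro _ z hz
        obtain ⟨u, v, huv⟩ := Ideal.mem_span_pair.mp (hI ▸ hz)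
        refine ⟨-(u * s) + v * r, ?_⟩
        have hra : r * a = -(s * b) := by linear_combination hsyz
        calc r * z = r * (u * a + v * b) := by rw [huv]
          _ = u * (r * a) + v * (r * b) := by ring
          _ = u * (-(s * b)) + v * (r * b) := by rw [hra]
          _ = b * (-(u * s) + v * r) := by ring
      · rw [Fin.sum_univ_one]; ring
    set T : Ideal R := Submodule.comap (Algebra.linearMap R (FractionRing R))
      (Submodule.map (Algebra.linearMap R (FractionRing R)) I *
        (1 / Submodule.map (Algebra.linearMap R (FractionRing R)) I)) with hT
    have hgoodT : ∀ t : R, Good I t → t ∈ T := by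
      intro t hg
      rw [hT, Submodule.mem_comap]
      exact good_mem_T hg
    have hsgT : sg p ∈ T := hgoodT _ (good_sg p hp hfaith)
    have heeT : ee p ∈ T := hgoodT _ (good_ee p hp hfaith)
    have hpT : (p : R) ∈ T := by
      obtain ⟨h, hh⟩ := e_sub_p p
      have hpe : (p : R) = ee p - sg p * h := by linear_combination -hh
      rw [hpe]
      exact Submodule.sub_mem _ heeT (Ideal.mul_mem_right _ _ hsgT)
    have hrT : r ∈ T := hgoodT _ hgoodr
    obtain ⟨yy, ii, hii, hone⟩ := (mI_maximal p hp).exists_inv hrm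
    have hiT : ii ∈ T := by
      obtain ⟨u, v, huv⟩ := Ideal.mem_span_pair.mp hii
      rw [← huv]
      exact Submodule.add_mem _ (Ideal.mul_mem_left _ _ hsgT) (Ideal.mul_mem_left _ _ hpT)
    have h1T : (1 : R) ∈ T := by
      rw [← hone]
      exact Submodule.add_mem _ (Ideal.mul_mem_left _ _ hrT) hiT
    apply hNI
    have h1 : algebraMap R (FractionRing R) 1 ∈
        (Submodule.map (Algebra.linearMap R (FractionRing R)) I *
          (1 / Submodule.map (Algebra.linearMap R (FractionRing R)) I)) := by
      rw [hT, Submodule.mem_comap] at h1T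
      exact h1T
    rw [map_one] at h1
    exact le_antisymm Submodule.mul_one_div_le_one (Submodule.one_le.mpr h1)

end Final
end CGR

/-- Let `p` be a prime and `R = ℤ[C_p] = ℤ[x]/(x^p - 1)` with `c` the
image of `x`.  For every faithful non-invertible ideal `I` of `R` (with generating pair
`(a, b)`), `Fitt₁(I) = R(c - 1) + Rp`, and this ideal is maximal in `R`. -/
theorem groupRing_fitting (p : ℕ) (hp : p.Prime) :
    (∀ (I : Ideal (CyclicGroupRing p)) (a b : CyclicGroupRing p),
      I = Ideal.span {a, b} →
      (∀ r : CyclicGroupRing p, (∀ x ∈ I, r * x = 0) → r = 0) →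
      ¬ (Submodule.map (Algebra.linearMap (CyclicGroupRing p)
            (FractionRing (CyclicGroupRing p))) I *
          ((1 : Submodule (CyclicGroupRing p) (FractionRing (CyclicGroupRing p))) /
            Submodule.map (Algebra.linearMap (CyclicGroupRing p)
              (FractionRing (CyclicGroupRing p))) I) = 1) →
      relFittingIdeal a b = Ideal.span {cyclicGen p - 1, (p : CyclicGroupRing p)}) ∧
    (Ideal.span {cyclicGen p - 1, (p : CyclicGroupRing p)}).IsMaximal := by
  constructor
  · intro I a b hI hfaith hNI
    have hmI : Ideal.span {cyclicGen p - 1, (p : CyclicGroupRing p)} = CGR.mI p := rfl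
    rw [hmI]
    apply le_antisymm
    · rw [relFittingIdeal, Ideal.span_le]
      rintro rr (⟨s, hsyz⟩ | ⟨s, hsyz⟩)
      · exact CGR.upper_helper p hp hI hfaith hNI hsyz
      · have hI' : I = Ideal.span {b, a} := by rw [hI]; congr 1; exact Set.pair_comm a b
        have hsyz' : rr * b + s * a = 0 := by linear_combination hsyz
        exact CGR.upper_helper p hp hI' hfaith hNI hsyz'
    · have h1 : CGR.sg p ∈ relFittingIdeal a b := good_mem_fitt hI (CGR.good_sg p hp hfaith)
      have h2 : CGR.ee p ∈ relFittingIdeal a b := good_mem_fitt hI (CGR.good_ee p hp hfaith)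
      have h3 : (p : CyclicGroupRing p) ∈ relFittingIdeal a b := by
        obtain ⟨h, hh⟩ := CGR.e_sub_p p
        have hpe : (p : CyclicGroupRing p) = CGR.ee p - CGR.sg p * h := by linear_combination -hh
        rw [hpe]
        exact Submodule.sub_mem _ h2 (Ideal.mul_mem_right _ _ h1)
      rw [CGR.mI, Ideal.span_le]
      rintro z hz
      rcases Set.mem_insert_iff.mp hz with rfl | hz2
      · exact h1
      · rw [Set.mem_singleton_iff.mp hz2]
        exact h3
  · exact CGR.mI_maximal p hp
end
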